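/- arXiv:0912.3241 — 3 statements merged into one kernel-verified Lean document; each statement's English description precedes it below -/
import Mathlib

section
/- Let Q(x,z) ∈ ℂ[x,z] be a polynomial such that deg_z Q(0,z) ≥ 2, and let S_{Q,1} = ℂ[x,y,z]/(x·y − Q(x,z)). Then the Makar-Limanov invariant of S_{Q,1}, i.e. the intersection of the kernels of all locally nilpotent ℂ-derivations of S_{Q,1}, is exactly ℂ (the image of the constants). -/
open MvPolynomial

noncomputable section

/-- The polynomial ring `ℂ[x,y,z]`, with `X 0 = x`, `X 1 = y`, `X 2 = z`. -/
abbrev R3 := MvPolynomial (Fin 3) ℂ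

/-- The polynomial ring `ℂ[x,z]`, with `X 0 = x`, `X 1 = z`. -/
abbrev R2 := MvPolynomial (Fin 2) ℂ

/-- The embedding `ℂ[x,z] → ℂ[x,y,z]`, `x ↦ x`, `z ↦ z`. -/
def toXYZ : R2 →ₐ[ℂ] R3 := aeval ![X 0, X 2]

/-- The defining polynomial `x^n y - Q(x,z)` of the Danielewski hypersurface `X_{Q,n}`. -/
def danPoly (Q : R2) (n : ℕ) : R3 := X 0 ^ n * X 1 - toXYZ Q

/-- The coordinate ring `S_{Q,n} = ℂ[x,y,z]/(x^n y - Q(x,z))`. -/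
abbrev danRing (Q : R2) (n : ℕ) := R3 ⧸ Ideal.span {danPoly Q n}

/-- The quotient projection `ℂ[x,y,z] → S_{Q,n}`. -/
def danProj (Q : R2) (n : ℕ) : R3 →ₐ[ℂ] danRing Q n := Ideal.Quotient.mkₐ ℂ _

/-- `Q(0,z)` as a univariate polynomial in `z`. -/
def Q0 (Q : R2) : Polynomial ℂ := aeval ![0, Polynomial.X] Q

/-- A derivation is locally nilpotent if every element is killed by some iterate. -/
def IsLND {A : Type*} [CommRing A] [Algebra ℂ A] (δ : Derivation ℂ A A) : Prop :=
  ∀ a : A, ∃ m : ℕ, 1 ≤ m ∧ (⇑δ)^[m] a = 0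

/-- Two Danielewski hypersurfaces are equivalent if some algebra automorphism of
`ℂ[x,y,z]` maps the ideal `(x^{n₁} y - Q₁)` onto the ideal `(x^{n₂} y - Q₂)`. -/
def DanEquiv (Q₁ : R2) (n₁ : ℕ) (Q₂ : R2) (n₂ : ℕ) : Prop :=
  ∃ Φ : R3 ≃ₐ[ℂ] R3,
    Ideal.map Φ.toAlgHom.toRingHom (Ideal.span {danPoly Q₁ n₁}) = Ideal.span {danPoly Q₂ n₂}

/-- `X_{Q,n}` is in standard form if `Q = p(z) + x q(x,z)` with `deg_z q < deg p`. -/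
def IsStandardForm (Q : R2) : Prop :=
  ∃ (p : Polynomial ℂ) (q : R2),
    Q = Polynomial.aeval (X 1) p + X 0 * q ∧ (q = 0 ∨ degreeOf 1 q < p.natDegree)

/-- `X_{Q,n}` is in reduced standard form if moreover `deg_x Q < n` and
`deg_z q < deg p - 1`. -/
def IsReducedStandardForm (Q : R2) (n : ℕ) : Prop :=
  degreeOf 0 Q < n ∧
  ∃ (p : Polynomial ℂ) (q : R2),
    Q = Polynomial.aeval (X 1) p + X 0 * q ∧ (q = 0 ∨ degreeOf 1 q < p.natDegree - 1)

section Aux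

open LaurentPolynomial

abbrev LL := LaurentPolynomial ℂ
abbrev BB := Polynomial LL

instance : IsDomain LL := NoZeroDivisors.to_isDomain _

instance : CharZero LL := ⟨fun a b h => by
  have : Polynomial.toLaurent (a : Polynomial ℂ) = Polynomial.toLaurent (b : Polynomial ℂ) := by
    simpa using h
  exact_mod_cast Polynomial.toLaurent_injective this⟩

@[simp] lemma toXYZ_X0 : toXYZ (X 0) = X 0 := by simp [toXYZ]
@[simp] lemma toXYZ_X1 : toXYZ (X 1) = X 2 := by simp [toXYZ]

/-- The ideal defining `S_{Q,1}`. -/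
abbrev Iq (Q : R2) : Ideal R3 := Ideal.span {danPoly Q 1}

lemma danPoly_mem (Q : R2) : danPoly Q 1 ∈ Iq Q := Ideal.subset_span rfl

def theta : R2 →ₐ[ℂ] BB := aeval ![Polynomial.C (T 1), Polynomial.X]
def psi (Q : R2) : R3 →ₐ[ℂ] BB :=
  aeval ![Polynomial.C (T 1), Polynomial.C (T (-1)) * theta Q, Polynomial.X]

@[simp] lemma theta_X0 : theta (X 0) = Polynomial.C (T 1) := by simp [theta]
@[simp] lemma theta_X1 : theta (X 1) = Polynomial.X := by simp [theta]
@[simp] lemma psi_X0 (Q : R2) : psi Q (X 0) = Polynomial.C (T 1) := by simp [psi]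
@[simp] lemma psi_X1 (Q : R2) : psi Q (X 1) = Polynomial.C (T (-1)) * theta Q := by simp [psi]
@[simp] lemma psi_X2 (Q : R2) : psi Q (X 2) = Polynomial.X := by simp [psi]

lemma CT_mul_CT : (Polynomial.C (T 1) : BB) * Polynomial.C (T (-1)) = 1 := by
  rw [← Polynomial.C_mul, ← T_add]
  norm_num

lemma psi_toXYZ (Q F : R2) : psi Q (toXYZ F) = theta F := by
  have h : (psi Q).comp toXYZ = theta := by
    apply MvPolynomial.algHom_ext
    intro i
    fin_cases i <;> simp [toXYZ]
  calc psi Q (toXYZ F) = ((psi Q).comp toXYZ) F := rfl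
  _ = theta F := by rw [h]

lemma psi_danPoly (Q : R2) : psi Q (danPoly Q 1) = 0 := by
  simp only [danPoly, map_sub, map_mul, map_pow, psi_X0, psi_X1, psi_toXYZ, pow_one]
  rw [← mul_assoc, CT_mul_CT, one_mul, sub_self]

/-- `theta` is injective. -/
lemma theta_injective : Function.Injective (theta : R2 → BB) := by
  classical
  let e3 : MvPolynomial (Fin 1) ℂ ≃ₐ[ℂ] Polynomial ℂ :=
    (finSuccEquiv ℂ 0).trans (Polynomial.mapAlgEquiv (isEmptyAlgEquiv ℂ (Fin 0)))
  let J : R2 →ₐ[ℂ] BB :=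
    ((Polynomial.mapAlgHom (Polynomial.toLaurentAlg.comp e3.toAlgHom)).comp
      (finSuccEquiv ℂ 1).toAlgHom).comp (rename (Equiv.swap (0 : Fin 2) 1))
  have hJ : theta = J := by
    apply MvPolynomial.algHom_ext
    intro i
    fin_cases i
    · show theta (X 0) = _
      simp only [theta_X0, J, AlgHom.coe_comp, Function.comp_apply, AlgEquiv.coe_algHom,
        rename_X]
      have hsw : (Equiv.swap (0:Fin 2) 1) ⟨0, by omega⟩ = 1 := by decide
      rw [hsw]
      have h1 : (finSuccEquiv ℂ 1) (X 1) = Polynomial.C (X 0) := by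
        have h2 : (1 : Fin 2) = Fin.succ 0 := rfl
        rw [h2, finSuccEquiv_X_succ]
      rw [h1]
      simp [Polynomial.mapAlgHom, e3, finSuccEquiv_X_zero]
    · show theta (X 1) = _
      simp only [theta_X1, J, AlgHom.coe_comp, Function.comp_apply, AlgEquiv.coe_algHom,
        rename_X]
      have hsw : (Equiv.swap (0:Fin 2) 1) ⟨1, by omega⟩ = 0 := by decide
      rw [hsw, finSuccEquiv_X_zero]
      simp [Polynomial.mapAlgHom]
  rw [hJ]
  have hinj3 : Function.Injective
      (Polynomial.toLaurentAlg.comp e3.toAlgHom : MvPolynomial (Fin 1) ℂ →ₐ[ℂ] LL) := by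
    intro a b h
    exact e3.injective (Polynomial.toLaurent_injective h)
  exact ((Polynomial.map_injective _ hinj3).comp
    ((finSuccEquiv ℂ 1).injective)).comp (rename_injective _ (Equiv.swap 0 1).injective)

/-! Evaluation maps. -/

def e0 : R2 →ₐ[ℂ] R2 := aeval ![0, X 1]
def eps0 : R3 →ₐ[ℂ] R2 := aeval ![0, X 0, X 1]
def sig : R2 →ₐ[ℂ] R3 := aeval ![X 1, X 2]
def rho : R2 →ₐ[ℂ] Polynomial ℂ := aeval ![0, Polynomial.X]

lemma R2_dvd_sub (F : R2) : (X 0 : R2) ∣ F - e0 F := by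
  induction F using MvPolynomial.induction_on with
  | C a => simp [e0]
  | add p q hp hq =>
      have h : p + q - e0 (p + q) = (p - e0 p) + (q - e0 q) := by rw [map_add]; ring
      rw [h]; exact dvd_add hp hq
  | mul_X p i hp =>
      have key : (X 0 : R2) ∣ X i - e0 (X i) := by
        fin_cases i <;> simp [e0]
      have h : p * X i - e0 (p * X i)
          = p * (X i - e0 (X i)) + e0 (X i) * (p - e0 p) := by rw [map_mul]; ring
      rw [h]
      exact dvd_add (Dvd.dvd.mul_left key p) (Dvd.dvd.mul_left hp _)

lemma e0_eq_Q0 (Q : R2) : e0 Q = Polynomial.aeval (X 1 : R2) (Q0 Q) := by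
  have h : e0 = (Polynomial.aeval (X 1 : R2)).comp rho := by
    apply MvPolynomial.algHom_ext
    intro i
    fin_cases i <;> simp [e0, rho]
  rw [h]; rfl

lemma exists_r (Q : R2) : ∃ r : R2, Q = Polynomial.aeval (X 1 : R2) (Q0 Q) + X 0 * r := by
  obtain ⟨r, hr⟩ := R2_dvd_sub Q
  exact ⟨r, by rw [← e0_eq_Q0]; linear_combination hr⟩

lemma R3_dvd_sub (h : R3) : (X 0 : R3) ∣ h - sig (eps0 h) := by
  induction h using MvPolynomial.induction_on with
  | C a => simp [sig, eps0]
  | add p q hp hq =>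
      have h : p + q - sig (eps0 (p + q)) = (p - sig (eps0 p)) + (q - sig (eps0 q)) := by
        rw [map_add, map_add]; ring
      rw [h]; exact dvd_add hp hq
  | mul_X p i hp =>
      have key : (X 0 : R3) ∣ X i - sig (eps0 (X i)) := by
        fin_cases i <;> simp [sig, eps0]
      have h : p * X i - sig (eps0 (p * X i))
          = p * (X i - sig (eps0 (X i))) + sig (eps0 (X i)) * (p - sig (eps0 p)) := by
        rw [map_mul, map_mul]; ring
      rw [h]
      exact dvd_add (Dvd.dvd.mul_left key p) (Dvd.dvd.mul_left hp _)

lemma X0_dvd_of_eval0 (h : R3) (hh : eps0 h = 0) : (X 0 : R3) ∣ h := by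
  have := R3_dvd_sub h
  rwa [hh, map_zero, sub_zero] at this

lemma rho_aevalX1 (b : Polynomial ℂ) : rho (Polynomial.aeval (X 1 : R2) b) = b := by
  have h1 : rho (X 1) = Polynomial.X := by simp [rho]
  rw [← Polynomial.aeval_algHom_apply rho (X 1) b, h1, Polynomial.aeval_X_left_apply]

lemma aevalX1_injective {a b : Polynomial ℂ}
    (h : Polynomial.aeval (X 1 : R2) a = Polynomial.aeval (X 1 : R2) b) : a = b := by
  have := congrArg rho h
  rwa [rho_aevalX1, rho_aevalX1] at this

end Aux

section Nilp

variable {A : Type*} [CommRing A] [Algebra ℂ A] (δ : Derivation ℂ A A)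

lemma iter_zero (n : ℕ) : (⇑δ)^[n] (0 : A) = 0 := Function.iterate_fixed (map_zero δ) n

lemma iter_add (n : ℕ) (a b : A) : (⇑δ)^[n] (a + b) = (⇑δ)^[n] a + (⇑δ)^[n] b := by
  induction n with
  | zero => rfl
  | succ n ih => rw [Function.iterate_succ_apply', Function.iterate_succ_apply',
      Function.iterate_succ_apply', ih, map_add]

lemma iter_eq_zero_of_le {m k : ℕ} (h : m ≤ k) {a : A} (ha : (⇑δ)^[m] a = 0) :
    (⇑δ)^[k] a = 0 := by
  obtain ⟨j, rfl⟩ := Nat.exists_eq_add_of_le h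
  rw [Nat.add_comm, Function.iterate_add_apply, ha, iter_zero]

lemma iter_mul_span (k : ℕ) (a b : A) :
    (⇑δ)^[k] (a * b) ∈ Submodule.span ℂ
      ((fun ij : ℕ × ℕ => (⇑δ)^[ij.1] a * (⇑δ)^[ij.2] b) '' {ij | ij.1 + ij.2 = k}) := by
  induction k with
  | zero =>
      exact Submodule.subset_span ⟨(0, 0), rfl, rfl⟩
  | succ k ih =>
      rw [Function.iterate_succ_apply']
      refine Submodule.span_induction
        (p := fun x _ => δ x ∈ Submodule.span ℂ
          ((fun ij : ℕ × ℕ => (⇑δ)^[ij.1] a * (⇑δ)^[ij.2] b) '' {ij | ij.1 + ij.2 = k + 1}))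
        ?_ ?_ ?_ ?_ ih
      · rintro x ⟨⟨i, j⟩, hij, rfl⟩
        simp only [Set.mem_setOf_eq] at hij
        show δ ((⇑δ)^[i] a * (⇑δ)^[j] b) ∈ _
        have hd : δ ((⇑δ)^[i] a * (⇑δ)^[j] b)
            = (⇑δ)^[i+1] a * (⇑δ)^[j] b + (⇑δ)^[i] a * (⇑δ)^[j+1] b := by
          rw [Derivation.leibniz, smul_eq_mul, smul_eq_mul,
            Function.iterate_succ_apply' (⇑δ) i a, Function.iterate_succ_apply' (⇑δ) j b]
          ring
        rw [hd]
        exact Submodule.add_mem _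
          (Submodule.subset_span ⟨(i+1, j), by simp only [Set.mem_setOf_eq]; omega, rfl⟩)
          (Submodule.subset_span ⟨(i, j+1), by simp only [Set.mem_setOf_eq]; omega, rfl⟩)
      · show δ (0:A) ∈ _
        rw [map_zero]; exact Submodule.zero_mem _
      · intro x y _ _ hx hy
        show δ (x + y) ∈ _
        rw [map_add]; exact Submodule.add_mem _ hx hy
      · intro c x _ hx
        show δ (c • x) ∈ _
        rw [Derivation.map_smul]; exact Submodule.smul_mem _ c hx

/-- The subalgebra of locally nilpotent elements for a derivation. -/
def nilpSet : Subalgebra ℂ A where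
  carrier := {a | ∃ n, (⇑δ)^[n] a = 0}
  add_mem' := by
    rintro a b ⟨m, hm⟩ ⟨n, hn⟩
    exact ⟨max m n, by rw [iter_add,
      iter_eq_zero_of_le δ (le_max_left m n) hm,
      iter_eq_zero_of_le δ (le_max_right m n) hn, add_zero]⟩
  mul_mem' := by
    rintro a b ⟨m, hm⟩ ⟨n, hn⟩
    refine ⟨m + n, ?_⟩
    have h := iter_mul_span δ (m + n) a b
    have hz : ∀ x ∈ ((fun ij : ℕ × ℕ => (⇑δ)^[ij.1] a * (⇑δ)^[ij.2] b)
        '' {ij | ij.1 + ij.2 = m + n}), x = 0 := by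
      rintro x ⟨⟨i, j⟩, hij, rfl⟩
      simp only [Set.mem_setOf_eq] at hij
      show (⇑δ)^[i] a * (⇑δ)^[j] b = 0
      rcases le_or_gt m i with hi | hi
      · rw [iter_eq_zero_of_le δ hi hm, zero_mul]
      · rw [iter_eq_zero_of_le δ (by omega : n ≤ j) hn, mul_zero]
    rw [Submodule.span_eq_bot.2 hz] at h
    simpa using h
  algebraMap_mem' := fun c => ⟨1, by simpa using δ.map_algebraMap c⟩

lemma mem_nilpSet_of_der {a : A} (h : δ a ∈ nilpSet δ) : a ∈ nilpSet δ := by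
  obtain ⟨n, hn⟩ := h
  exact ⟨n + 1, by rwa [Function.iterate_succ_apply]⟩

lemma isLND_of_nilpSet_top (h : nilpSet δ = ⊤) : IsLND δ := by
  intro a
  have ha : a ∈ nilpSet δ := h ▸ trivial
  obtain ⟨n, hn⟩ := ha
  exact ⟨n + 1, by omega, iter_eq_zero_of_le δ (by omega) hn⟩

end Nilp

lemma nilpSet_top_R3 (δ : Derivation ℂ R3 R3) (h : ∀ i, X i ∈ nilpSet δ) :
    nilpSet δ = ⊤ := by
  rw [eq_top_iff, ← MvPolynomial.adjoin_range_X]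
  exact Algebra.adjoin_le (by rintro x ⟨i, rfl⟩; exact h i)

lemma aeval2_mem (S : Subalgebra ℂ R3) (v : Fin 2 → R3) (hv : ∀ i, v i ∈ S) (F : R2) :
    aeval v F ∈ S := by
  induction F using MvPolynomial.induction_on with
  | C a => rw [aeval_C]; exact S.algebraMap_mem a
  | add p q hp hq => rw [map_add]; exact S.add_mem hp hq
  | mul_X p i hp => rw [map_mul, aeval_X]; exact S.mul_mem hp (hv i)

lemma toXYZ_mem (S : Subalgebra ℂ R3) (h0 : X 0 ∈ S) (h2 : X 2 ∈ S) (F : R2) :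
    toXYZ F ∈ S := by
  have : toXYZ F = aeval ![X 0, X 2] F := rfl
  rw [this]
  exact aeval2_mem S _ (fun i => by fin_cases i <;> assumption) F

lemma paeval_mem {A : Type*} [CommRing A] [Algebra ℂ A] (S : Subalgebra ℂ A) (u : A)
    (hu : u ∈ S) (b : Polynomial ℂ) : Polynomial.aeval u b ∈ S := by
  induction b using Polynomial.induction_on with
  | C a => rw [Polynomial.aeval_C]; exact S.algebraMap_mem a
  | add p q hp hq => rw [map_add]; exact S.add_mem hp hq
  | monomial n c _ => rw [map_mul, map_pow, Polynomial.aeval_X, Polynomial.aeval_C]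
                      exact S.mul_mem (S.algebraMap_mem c) (S.pow_mem hu _)

/-! Chain rules. -/

lemma der_toXYZ (δ : Derivation ℂ R3 R3) (F : R2) :
    δ (toXYZ F) = toXYZ (pderiv 0 F) * δ (X 0) + toXYZ (pderiv 1 F) * δ (X 2) := by
  induction F using MvPolynomial.induction_on with
  | C a => simp [toXYZ]
  | add p q hp hq => simp only [map_add, hp, hq]; ring
  | mul_X p i hp =>
      rw [map_mul, Derivation.leibniz, smul_eq_mul, smul_eq_mul, hp]
      have base : δ (toXYZ (X i)) = toXYZ (pderiv 0 (X i)) * δ (X 0)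
          + toXYZ (pderiv 1 (X i)) * δ (X 2) := by
        fin_cases i <;>
          simp [toXYZ, pderiv_X_self, pderiv_X_of_ne, show (0:Fin 2) ≠ 1 by decide,
            show (1:Fin 2) ≠ 0 by decide]
      rw [base]
      simp only [pderiv_mul, map_add, map_mul]
      ring

lemma der_paeval (δ : Derivation ℂ R3 R3) (u : R3) (b : Polynomial ℂ) :
    δ (Polynomial.aeval u b) = Polynomial.aeval u (Polynomial.derivative b) * δ u := by
  induction b using Polynomial.induction_on with
  | C a => simp
  | add p q hp hq => simp only [map_add, hp, hq]; ring
  | monomial n c ih =>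
      rw [map_mul, map_pow, Polynomial.aeval_C, Polynomial.aeval_X]
      rw [Derivation.leibniz, Derivation.leibniz_pow, smul_eq_mul, smul_eq_mul, smul_eq_mul]
      rw [Derivation.map_algebraMap]
      rw [Polynomial.derivative_C_mul_X_pow]
      simp only [map_mul, map_natCast, map_pow, Polynomial.aeval_C, Polynomial.aeval_X]
      push_cast
      ring

/-! Quotient derivations. -/

lemma der_mem_Iq (Q : R2) (δ : Derivation ℂ R3 R3) (hδ : δ (danPoly Q 1) = 0) :
    ∀ g ∈ Iq Q, δ g ∈ Iq Q := by
  intro g hg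
  rw [Ideal.mem_span_singleton] at hg
  obtain ⟨t, rfl⟩ := hg
  rw [Derivation.leibniz, smul_eq_mul, smul_eq_mul, hδ, mul_zero, add_zero]
  exact Ideal.mul_mem_right _ _ (danPoly_mem Q)

def qDerFun (Q : R2) (δ : Derivation ℂ R3 R3) : danRing Q 1 → danRing Q 1 :=
  fun a => Ideal.Quotient.mk (Iq Q)
    (δ (Function.surjInv Ideal.Quotient.mk_surjective a))

lemma qDerFun_mk (Q : R2) (δ : Derivation ℂ R3 R3) (hδ : δ (danPoly Q 1) = 0) (f : R3) :
    qDerFun Q δ (Ideal.Quotient.mk (Iq Q) f) = Ideal.Quotient.mk (Iq Q) (δ f) := by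
  set s := Function.surjInv (Ideal.Quotient.mk_surjective (I := Iq Q)) with hs
  have h1 : Ideal.Quotient.mk (Iq Q) (s (Ideal.Quotient.mk (Iq Q) f))
      = Ideal.Quotient.mk (Iq Q) f := Function.surjInv_eq _ _
  have h2 : s (Ideal.Quotient.mk (Iq Q) f) - f ∈ Iq Q := (Ideal.Quotient.eq).1 h1
  have h3 := der_mem_Iq Q δ hδ _ h2
  rw [map_sub] at h3
  exact (Ideal.Quotient.eq).2 h3

lemma mk_smul (Q : R2) (c : ℂ) (f : R3) :
    Ideal.Quotient.mk (Iq Q) (c • f) = c • Ideal.Quotient.mk (Iq Q) f := by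
  rw [← Ideal.Quotient.mkₐ_eq_mk ℂ (Iq Q)]
  exact map_smul (Ideal.Quotient.mkₐ ℂ (Iq Q)) c f

/-- The induced linear map on the quotient ring. -/
def qDerL (Q : R2) (δ : Derivation ℂ R3 R3) (hδ : δ (danPoly Q 1) = 0) :
    danRing Q 1 →ₗ[ℂ] danRing Q 1 where
  toFun := qDerFun Q δ
  map_add' := by
    intro a b
    obtain ⟨f, rfl⟩ := Ideal.Quotient.mk_surjective (I := Iq Q) a
    obtain ⟨g, rfl⟩ := Ideal.Quotient.mk_surjective (I := Iq Q) b
    rw [← map_add, qDerFun_mk Q δ hδ, qDerFun_mk Q δ hδ, qDerFun_mk Q δ hδ, map_add, map_add]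
  map_smul' := by
    intro c a
    obtain ⟨f, rfl⟩ := Ideal.Quotient.mk_surjective (I := Iq Q) a
    show qDerFun Q δ (c • Ideal.Quotient.mk (Iq Q) f)
      = (RingHom.id ℂ) c • qDerFun Q δ (Ideal.Quotient.mk (Iq Q) f)
    rw [RingHom.id_apply, ← mk_smul, qDerFun_mk Q δ hδ, qDerFun_mk Q δ hδ,
      Derivation.map_smul, mk_smul]

lemma qDerL_mk (Q : R2) (δ : Derivation ℂ R3 R3) (hδ : δ (danPoly Q 1) = 0) (f : R3) :
    qDerL Q δ hδ (Ideal.Quotient.mk (Iq Q) f) = Ideal.Quotient.mk (Iq Q) (δ f) :=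
  qDerFun_mk Q δ hδ f

/-- The derivation induced on the quotient ring. -/
def qDer (Q : R2) (δ : Derivation ℂ R3 R3) (hδ : δ (danPoly Q 1) = 0) :
    Derivation ℂ (danRing Q 1) (danRing Q 1) where
  toLinearMap := qDerL Q δ hδ
  map_one_eq_zero' := by
    have h1 : (1 : danRing Q 1) = Ideal.Quotient.mk (Iq Q) 1 := rfl
    show qDerL Q δ hδ 1 = 0
    rw [h1, qDerL_mk Q δ hδ, Derivation.map_one_eq_zero, map_zero]
  leibniz' := by
    intro a b
    obtain ⟨f, rfl⟩ := Ideal.Quotient.mk_surjective (I := Iq Q) a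
    obtain ⟨g, rfl⟩ := Ideal.Quotient.mk_surjective (I := Iq Q) b
    show qDerL Q δ hδ _ = Ideal.Quotient.mk (Iq Q) f • qDerL Q δ hδ (Ideal.Quotient.mk (Iq Q) g)
      + Ideal.Quotient.mk (Iq Q) g • qDerL Q δ hδ (Ideal.Quotient.mk (Iq Q) f)
    rw [← map_mul, qDerL_mk Q δ hδ, qDerL_mk Q δ hδ, qDerL_mk Q δ hδ,
      Derivation.leibniz, smul_eq_mul, smul_eq_mul, smul_eq_mul, smul_eq_mul,
      map_add, map_mul, map_mul]

lemma qDer_mk (Q : R2) (δ : Derivation ℂ R3 R3) (hδ : δ (danPoly Q 1) = 0) (f : R3) :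
    qDer Q δ hδ (Ideal.Quotient.mk (Iq Q) f) = Ideal.Quotient.mk (Iq Q) (δ f) :=
  qDerFun_mk Q δ hδ f

lemma qDer_iter (Q : R2) (δ : Derivation ℂ R3 R3) (hδ : δ (danPoly Q 1) = 0) (n : ℕ) (f : R3) :
    (⇑(qDer Q δ hδ))^[n] (Ideal.Quotient.mk (Iq Q) f)
      = Ideal.Quotient.mk (Iq Q) ((⇑δ)^[n] f) := by
  induction n generalizing f with
  | zero => rfl
  | succ n ih =>
      rw [Function.iterate_succ_apply, Function.iterate_succ_apply, qDer_mk, ih]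

lemma qDer_isLND (Q : R2) (δ : Derivation ℂ R3 R3) (hδ : δ (danPoly Q 1) = 0)
    (h : nilpSet δ = ⊤) : IsLND (qDer Q δ hδ) := by
  intro a
  obtain ⟨f, rfl⟩ := Ideal.Quotient.mk_surjective (I := Iq Q) a
  have hf : f ∈ nilpSet δ := h ▸ trivial
  obtain ⟨n, hn⟩ := hf
  refine ⟨n + 1, by omega, ?_⟩
  rw [qDer_iter, iter_eq_zero_of_le δ (by omega : n ≤ n + 1) hn, map_zero]


/-! The two locally nilpotent derivations. -/

/-- `p(z)` as an element of `R3`, evaluated at `z = X 2`. -/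
def Pz (b : Polynomial ℂ) : R3 := Polynomial.aeval (X 2 : R3) b

lemma toXYZ_paeval (b : Polynomial ℂ) : toXYZ (Polynomial.aeval (X 1 : R2) b) = Pz b := by
  rw [Pz, ← Polynomial.aeval_algHom_apply toXYZ (X 1) b, toXYZ_X1]

/-- The derivation `x ∂_z + Q_z ∂_y`. -/
def del1 (Q : R2) : Derivation ℂ R3 R3 :=
  MvPolynomial.mkDerivation ℂ ![0, toXYZ (pderiv 1 Q), X 0]

@[simp] lemma del1_X0 (Q : R2) : del1 Q (X 0) = 0 := by
  rw [del1, mkDerivation_X]; rfl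
@[simp] lemma del1_X1 (Q : R2) : del1 Q (X 1) = toXYZ (pderiv 1 Q) := by
  rw [del1, mkDerivation_X]; rfl
@[simp] lemma del1_X2 (Q : R2) : del1 Q (X 2) = X 0 := by
  rw [del1, mkDerivation_X]; rfl

lemma del1_danPoly (Q : R2) : del1 Q (danPoly Q 1) = 0 := by
  rw [danPoly, map_sub, pow_one, Derivation.leibniz, smul_eq_mul, smul_eq_mul,
    del1_X0, del1_X1, der_toXYZ (del1 Q) Q, del1_X0, del1_X2]
  ring

lemma del1_nilp (Q : R2) : nilpSet (del1 Q) = ⊤ := by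
  apply nilpSet_top_R3
  have h0 : X 0 ∈ nilpSet (del1 Q) := ⟨1, by simp⟩
  have h2 : X 2 ∈ nilpSet (del1 Q) :=
    mem_nilpSet_of_der _ (by rw [del1_X2]; exact h0)
  intro i
  fin_cases i
  · exact h0
  · show (X 1 : R3) ∈ _
    exact mem_nilpSet_of_der _ (by rw [del1_X1]; exact toXYZ_mem _ h0 h2 _)
  · exact h2

/-- The derivation `p'(z) ∂_x + (y - r) ∂_z + (r_x p' + r_z (y - r)) ∂_y`. -/
def del2 (p : Polynomial ℂ) (r : R2) : Derivation ℂ R3 R3 :=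
  MvPolynomial.mkDerivation ℂ ![Pz (Polynomial.derivative p),
    toXYZ (pderiv 0 r) * Pz (Polynomial.derivative p)
      + toXYZ (pderiv 1 r) * (X 1 - toXYZ r),
    X 1 - toXYZ r]

@[simp] lemma del2_X0 (p : Polynomial ℂ) (r : R2) :
    del2 p r (X 0) = Pz (Polynomial.derivative p) := by
  rw [del2, mkDerivation_X]; rfl
@[simp] lemma del2_X1 (p : Polynomial ℂ) (r : R2) :
    del2 p r (X 1) = toXYZ (pderiv 0 r) * Pz (Polynomial.derivative p)
      + toXYZ (pderiv 1 r) * (X 1 - toXYZ r) := by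
  rw [del2, mkDerivation_X]; rfl
@[simp] lemma del2_X2 (p : Polynomial ℂ) (r : R2) :
    del2 p r (X 2) = X 1 - toXYZ r := by
  rw [del2, mkDerivation_X]; rfl

lemma del2_toXYZr (p : Polynomial ℂ) (r : R2) :
    del2 p r (toXYZ r) = toXYZ (pderiv 0 r) * Pz (Polynomial.derivative p)
      + toXYZ (pderiv 1 r) * (X 1 - toXYZ r) := by
  rw [der_toXYZ (del2 p r) r, del2_X0, del2_X2]

lemma del2_w (p : Polynomial ℂ) (r : R2) : del2 p r (X 1 - toXYZ r) = 0 := by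
  rw [map_sub, del2_X1, del2_toXYZr, sub_self]

lemma del2_danPoly (Q : R2) (p : Polynomial ℂ) (r : R2)
    (hQr : Q = Polynomial.aeval (X 1 : R2) p + X 0 * r) :
    del2 p r (danPoly Q 1) = 0 := by
  have hQ3 : toXYZ Q = Pz p + X 0 * toXYZ r := by
    rw [hQr, map_add, map_mul, toXYZ_paeval, toXYZ_X0]
  have h1 : del2 p r (X 0 * X 1)
      = X 0 * (toXYZ (pderiv 0 r) * Pz (Polynomial.derivative p)
          + toXYZ (pderiv 1 r) * (X 1 - toXYZ r)) + X 1 * Pz (Polynomial.derivative p) := by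
    rw [Derivation.leibniz, smul_eq_mul, smul_eq_mul, del2_X0, del2_X1]
  have h2 : del2 p r (Pz p) = Pz (Polynomial.derivative p) * (X 1 - toXYZ r) := by
    show del2 p r (Polynomial.aeval (X 2 : R3) p)
      = Polynomial.aeval (X 2 : R3) (Polynomial.derivative p) * (X 1 - toXYZ r)
    rw [der_paeval, del2_X2]
  have h3 : del2 p r (X 0 * toXYZ r)
      = X 0 * (toXYZ (pderiv 0 r) * Pz (Polynomial.derivative p)
          + toXYZ (pderiv 1 r) * (X 1 - toXYZ r)) + toXYZ r * Pz (Polynomial.derivative p) := by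
    rw [Derivation.leibniz, smul_eq_mul, smul_eq_mul, del2_X0, del2_toXYZr]
  rw [danPoly, pow_one, map_sub, hQ3, map_add, h1, h2, h3]
  ring

lemma del2_nilp (p : Polynomial ℂ) (r : R2) : nilpSet (del2 p r) = ⊤ := by
  apply nilpSet_top_R3
  have hw : (X 1 - toXYZ r : R3) ∈ nilpSet (del2 p r) := ⟨1, by simp [del2_w]⟩
  have h2 : (X 2 : R3) ∈ nilpSet (del2 p r) :=
    mem_nilpSet_of_der _ (by rw [del2_X2]; exact hw)
  have h0 : (X 0 : R3) ∈ nilpSet (del2 p r) :=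
    mem_nilpSet_of_der _ (by rw [del2_X0]; exact paeval_mem _ _ h2 _)
  have hr : toXYZ r ∈ nilpSet (del2 p r) := toXYZ_mem _ h0 h2 r
  have h1 : (X 1 : R3) ∈ nilpSet (del2 p r) := by
    have e : (X 1 : R3) = (X 1 - toXYZ r) + toXYZ r := by ring
    rw [e]; exact Subalgebra.add_mem _ hw hr
  intro i
  fin_cases i
  · exact h0
  · exact h1
  · exact h2

/-! The kernel of `psi` is exactly the ideal. -/

lemma psi_mem_ker (Q : R2) {g : R3} (hg : g ∈ Iq Q) : psi Q g = 0 := by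
  rw [Ideal.mem_span_singleton] at hg
  obtain ⟨t, rfl⟩ := hg
  rw [map_mul, psi_danPoly, zero_mul]

lemma reduce_y (Q : R2) (f : R3) : ∃ (m : ℕ) (F : R2), X 0 ^ m * f - toXYZ F ∈ Iq Q := by
  induction f using MvPolynomial.induction_on with
  | C a =>
      refine ⟨0, C a, ?_⟩
      have h : toXYZ (C a) = C a := by simp [toXYZ]
      rw [pow_zero, one_mul, h, sub_self]
      exact zero_mem _
  | add p q hp hq =>
      obtain ⟨m1, F1, h1⟩ := hp
      obtain ⟨m2, F2, h2⟩ := hq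
      refine ⟨m1 + m2, X 0 ^ m2 * F1 + X 0 ^ m1 * F2, ?_⟩
      have h : X 0 ^ (m1 + m2) * (p + q) - toXYZ (X 0 ^ m2 * F1 + X 0 ^ m1 * F2)
          = X 0 ^ m2 * (X 0 ^ m1 * p - toXYZ F1) + X 0 ^ m1 * (X 0 ^ m2 * q - toXYZ F2) := by
        rw [map_add, map_mul, map_mul, map_pow, map_pow, toXYZ_X0]; ring
      rw [h]
      exact add_mem (Ideal.mul_mem_left _ _ h1) (Ideal.mul_mem_left _ _ h2)
  | mul_X p i hp =>
      obtain ⟨m, F, hF⟩ := hp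
      fin_cases i
      · refine ⟨m, F * X 0, ?_⟩
        show X 0 ^ m * (p * X 0) - toXYZ (F * X 0) ∈ Iq Q
        have h : X 0 ^ m * (p * X 0) - toXYZ (F * X 0)
            = (X 0 ^ m * p - toXYZ F) * X 0 := by
          rw [map_mul, toXYZ_X0]; ring
        rw [h]
        exact Ideal.mul_mem_right _ _ hF
      · refine ⟨m + 1, F * Q, ?_⟩
        show X 0 ^ (m + 1) * (p * X 1) - toXYZ (F * Q) ∈ Iq Q
        have h : X 0 ^ (m + 1) * (p * X 1) - toXYZ (F * Q)
            = (X 0 ^ m * p) * danPoly Q 1 + toXYZ Q * (X 0 ^ m * p - toXYZ F) := by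
          rw [map_mul, danPoly, pow_one]; ring
        rw [h]
        exact add_mem (Ideal.mul_mem_left _ _ (danPoly_mem Q))
          (Ideal.mul_mem_left _ _ hF)
      · refine ⟨m, F * X 1, ?_⟩
        show X 0 ^ m * (p * X 2) - toXYZ (F * X 1) ∈ Iq Q
        have h : X 0 ^ m * (p * X 2) - toXYZ (F * X 1)
            = (X 0 ^ m * p - toXYZ F) * X 2 := by
          rw [map_mul, toXYZ_X1]; ring
        rw [h]
        exact Ideal.mul_mem_right _ _ hF

lemma eps0_danPoly (Q : R2) : eps0 (danPoly Q 1) = -(Polynomial.aeval (X 1 : R2) (Q0 Q)) := by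
  have h0 : eps0 (X 0 : R3) = 0 := by simp [eps0]
  have ht : eps0 (toXYZ Q) = e0 Q := by
    have h : eps0.comp toXYZ = e0 := by
      apply MvPolynomial.algHom_ext
      intro i
      fin_cases i <;> simp [eps0, toXYZ, e0]
    calc eps0 (toXYZ Q) = (eps0.comp toXYZ) Q := rfl
    _ = e0 Q := by rw [h]
  rw [danPoly, map_sub, pow_one, map_mul, h0, zero_mul, zero_sub, ht, e0_eq_Q0]

lemma aevalX1_Q0_ne (Q : R2) (hQ0 : Q0 Q ≠ 0) :
    Polynomial.aeval (X 1 : R2) (Q0 Q) ≠ 0 := by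
  intro hc
  exact hQ0 (aevalX1_injective (by simpa using hc))

lemma X0_mul_mem (Q : R2) (hQ0 : Q0 Q ≠ 0) {g : R3} (h : X 0 * g ∈ Iq Q) : g ∈ Iq Q := by
  rw [Ideal.mem_span_singleton] at h ⊢
  obtain ⟨t, ht⟩ := h
  have he : eps0 (X 0 : R3) * eps0 g = eps0 (danPoly Q 1) * eps0 t := by
    rw [← map_mul, ← map_mul, ht]
  have h0 : eps0 (X 0 : R3) = 0 := by simp [eps0]
  rw [h0, zero_mul, eps0_danPoly] at he
  have ht0 : eps0 t = 0 := by
    rcases mul_eq_zero.1 he.symm with h' | h'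
    · exact absurd (neg_eq_zero.1 h') (aevalX1_Q0_ne Q hQ0)
    · exact h'
  obtain ⟨t1, rfl⟩ := X0_dvd_of_eval0 t ht0
  refine ⟨t1, ?_⟩
  have hc : X 0 * g = X 0 * (danPoly Q 1 * t1) := by rw [ht]; ring
  exact mul_left_cancel₀ (MvPolynomial.X_ne_zero 0) hc

lemma X0_pow_mul_mem (Q : R2) (hQ0 : Q0 Q ≠ 0) :
    ∀ (m : ℕ) (g : R3), X 0 ^ m * g ∈ Iq Q → g ∈ Iq Q := by
  intro m
  induction m with
  | zero => intro g h; rwa [pow_zero, one_mul] at h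
  | succ m ih =>
      intro g h
      have h' : X 0 ^ m * g ∈ Iq Q := by
        apply X0_mul_mem Q hQ0
        have e : X 0 * (X 0 ^ m * g) = X 0 ^ (m + 1) * g := by ring
        rwa [e]
      exact ih g h'

lemma psi_ker (Q : R2) (hQ0 : Q0 Q ≠ 0) {f : R3} (hf : psi Q f = 0) : f ∈ Iq Q := by
  obtain ⟨m, F, hmF⟩ := reduce_y Q f
  have h1 : psi Q (X 0 ^ m * f - toXYZ F) = 0 := psi_mem_ker Q hmF
  rw [map_sub, map_mul, map_pow, hf, mul_zero, zero_sub, neg_eq_zero, psi_toXYZ] at h1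
  have hF : F = 0 := theta_injective (by rw [h1, map_zero])
  rw [hF, map_zero, sub_zero] at hmF
  exact X0_pow_mul_mem Q hQ0 m f hmF


/-! Compatibility of `psi` with the derivations, and final computations. -/

section Final

open LaurentPolynomial

lemma T1_ne : (T 1 : LL) ≠ 0 := by
  rw [← Polynomial.toLaurent_X]
  intro h
  exact Polynomial.X_ne_zero (Polynomial.toLaurent_injective (by rw [h, map_zero]))

lemma CT1_ne : (Polynomial.C (T 1) : BB) ≠ 0 := by
  simpa [Polynomial.C_eq_zero] using T1_ne

lemma theta_deriv (F : R2) :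
    Polynomial.derivative (theta F) = theta (pderiv 1 F) := by
  induction F using MvPolynomial.induction_on with
  | C a => simp [theta, Polynomial.algebraMap_apply]
  | add p q hp hq => simp only [map_add, hp, hq]
  | mul_X p i hp =>
      rw [map_mul, Polynomial.derivative_mul, hp]
      fin_cases i
      · show theta (pderiv 1 p) * theta (X 0) + theta p * Polynomial.derivative (theta (X 0))
          = theta (pderiv 1 (p * X 0))
        have h0 : pderiv 1 (X 0 : R2) = 0 := pderiv_X_of_ne (by decide)
        rw [pderiv_mul, h0, mul_zero, add_zero, map_mul, theta_X0, Polynomial.derivative_C]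
        ring
      · show theta (pderiv 1 p) * theta (X 1) + theta p * Polynomial.derivative (theta (X 1))
          = theta (pderiv 1 (p * X 1))
        have h1 : pderiv 1 (X 1 : R2) = 1 := pderiv_X_self 1
        rw [pderiv_mul, h1, mul_one, map_add, map_mul, theta_X1, Polynomial.derivative_X]
        ring

lemma psi_del1 (Q : R2) (f : R3) :
    psi Q (del1 Q f) = Polynomial.C (T 1) * Polynomial.derivative (psi Q f) := by
  induction f using MvPolynomial.induction_on with
  | C a =>
      rw [show (C a : R3) = algebraMap ℂ R3 a from rfl, Derivation.map_algebraMap, map_zero]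
      rw [AlgHom.commutes, Polynomial.algebraMap_apply, Polynomial.derivative_C, mul_zero]
  | add p q hp hq =>
      simp only [map_add, hp, hq, Polynomial.derivative_add, mul_add]
  | mul_X p i hp =>
      rw [Derivation.leibniz, smul_eq_mul, smul_eq_mul, map_add, map_mul, map_mul, hp]
      have hb : psi Q (del1 Q (X i))
          = Polynomial.C (T 1) * Polynomial.derivative (psi Q (X i)) := by
        fin_cases i
        · show psi Q (del1 Q (X 0)) = Polynomial.C (T 1) * Polynomial.derivative (psi Q (X 0))
          rw [del1_X0, map_zero, psi_X0, Polynomial.derivative_C, mul_zero]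
        · show psi Q (del1 Q (X 1)) = Polynomial.C (T 1) * Polynomial.derivative (psi Q (X 1))
          rw [del1_X1, psi_toXYZ, psi_X1, Polynomial.derivative_C_mul, ← theta_deriv,
            ← mul_assoc, CT_mul_CT, one_mul]
        · show psi Q (del1 Q (X 2)) = Polynomial.C (T 1) * Polynomial.derivative (psi Q (X 2))
          rw [del1_X2, psi_X0, psi_X2, Polynomial.derivative_X, mul_one]
      rw [hb, map_mul, Polynomial.derivative_mul]
      ring

lemma aevalCT (b : Polynomial ℂ) :
    Polynomial.aeval (Polynomial.C (T 1) : BB) b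
      = Polynomial.C (Polynomial.toLaurent b) := by
  induction b using Polynomial.induction_on with
  | C a =>
      rw [Polynomial.aeval_C, Polynomial.toLaurent_C, Polynomial.algebraMap_apply]
      rfl
  | add p q hp hq => rw [map_add, hp, hq, map_add, map_add]
  | monomial n c _ =>
      have hR : Polynomial.toLaurent (Polynomial.C c * Polynomial.X ^ (n + 1))
          = LaurentPolynomial.C c * T ((n : ℤ) + 1) := by
        rw [map_mul, map_pow, Polynomial.toLaurent_C, Polynomial.toLaurent_X, T_pow, mul_one,
          Nat.cast_add_one]
      rw [map_mul, map_pow, Polynomial.aeval_C, Polynomial.aeval_X, hR,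
        Polynomial.algebraMap_apply, ← Polynomial.C_pow, ← Polynomial.C_mul, T_pow, mul_one,
        Nat.cast_add_one]
      rfl

lemma aevalXBB (b : Polynomial ℂ) :
    Polynomial.aeval (Polynomial.X : BB) b = Polynomial.map (algebraMap ℂ LL) b := by
  induction b using Polynomial.induction_on with
  | C a => rw [Polynomial.aeval_C, Polynomial.map_C, Polynomial.algebraMap_apply]
  | add p q hp hq => rw [map_add, hp, hq, Polynomial.map_add]
  | monomial n c _ =>
      rw [map_mul, map_pow, Polynomial.aeval_C, Polynomial.aeval_X,
        Polynomial.map_mul, Polynomial.map_pow, Polynomial.map_C, Polynomial.map_X,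
        Polynomial.algebraMap_apply]

lemma psi_paevalX0 (Q : R2) (b : Polynomial ℂ) :
    psi Q (Polynomial.aeval (X 0 : R3) b) = Polynomial.C (Polynomial.toLaurent b) := by
  rw [← Polynomial.aeval_algHom_apply (psi Q) (X 0) b, psi_X0, aevalCT]

lemma psi_Pz (Q : R2) (b : Polynomial ℂ) :
    psi Q (Pz b) = Polynomial.map (algebraMap ℂ LL) b := by
  have h : Pz b = Polynomial.aeval (X 2 : R3) b := rfl
  rw [h, ← Polynomial.aeval_algHom_apply (psi Q) (X 2) b, psi_X2, aevalXBB]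

/-- The map `R3 → ℂ[z]` sending `x ↦ 0`, `y ↦ 0`, `z ↦ X`. -/
def kap : R3 →ₐ[ℂ] Polynomial ℂ := rho.comp eps0

lemma kap_danPoly (Q : R2) : kap (danPoly Q 1) = -(Q0 Q) := by
  rw [kap, AlgHom.comp_apply, eps0_danPoly, map_neg, rho_aevalX1]

lemma kap_X0 : kap (X 0) = 0 := by simp [kap, eps0, rho]

/-- Stripping powers of `x`. -/
lemma strip (Q : R2) (hQ2 : 2 ≤ (Q0 Q).natDegree) (f : R3) :
    ∀ (n : ℕ) (b0 : Polynomial ℂ),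
      Ideal.Quotient.mk (Iq Q) (X 0 ^ n * f)
        = Ideal.Quotient.mk (Iq Q) (Polynomial.aeval (X 0 : R3) b0) →
      ∃ b : Polynomial ℂ,
        Ideal.Quotient.mk (Iq Q) f
          = Ideal.Quotient.mk (Iq Q) (Polynomial.aeval (X 0 : R3) b) := by
  have hQ0 : Q0 Q ≠ 0 := by
    intro h
    rw [h, Polynomial.natDegree_zero] at hQ2
    omega
  intro n
  induction n with
  | zero =>
      intro b0 h
      exact ⟨b0, by rwa [pow_zero, one_mul] at h⟩
  | succ n ih =>
      intro b0 h
      -- first, the constant coefficient of b0 vanishes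
      have hmem : X 0 ^ (n + 1) * f - Polynomial.aeval (X 0 : R3) b0 ∈ Iq Q :=
        (Ideal.Quotient.eq).1 h
      have hcoeff : b0.coeff 0 = 0 := by
        rw [Ideal.mem_span_singleton] at hmem
        obtain ⟨t, ht⟩ := hmem
        have hk : kap (X 0 ^ (n + 1) * f) - kap (Polynomial.aeval (X 0 : R3) b0)
            = (-(Q0 Q)) * kap t := by
          rw [← kap_danPoly Q, ← map_mul, ← map_sub, ht]
        have h1 : kap (X 0 ^ (n + 1) * f) = 0 := by
          rw [map_mul, map_pow, kap_X0, zero_pow (by omega), zero_mul]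
        have h2 : kap (Polynomial.aeval (X 0 : R3) b0) = Polynomial.C (b0.coeff 0) := by
          rw [← Polynomial.aeval_algHom_apply kap (X 0) b0, kap_X0]
          rw [Polynomial.aeval_def, Polynomial.eval₂_at_zero, Polynomial.C_eq_algebraMap]
        rw [h1, h2, zero_sub] at hk
        by_contra hc
        have hdvd : Q0 Q ∣ Polynomial.C (b0.coeff 0) := by
          refine ⟨kap t, ?_⟩
          linear_combination -hk
        have hne : Polynomial.C (b0.coeff 0) ≠ 0 := by
          rwa [ne_eq, Polynomial.C_eq_zero]
        have := Polynomial.natDegree_le_of_dvd hdvd hne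
        rw [Polynomial.natDegree_C] at this
        omega
      obtain ⟨b1, rfl⟩ := (Polynomial.X_dvd_iff).2 hcoeff
      have h' : Ideal.Quotient.mk (Iq Q) (X 0 * (X 0 ^ n * f))
          = Ideal.Quotient.mk (Iq Q) (X 0 * Polynomial.aeval (X 0 : R3) b1) := by
        have e1 : X 0 * (X 0 ^ n * f) = X 0 ^ (n + 1) * f := by ring
        have e2 : X 0 * Polynomial.aeval (X 0 : R3) b1
            = Polynomial.aeval (X 0 : R3) (Polynomial.X * b1) := by
          rw [map_mul, Polynomial.aeval_X]
        rw [e1, e2]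
        exact h
      have hmem2 : X 0 * (X 0 ^ n * f - Polynomial.aeval (X 0 : R3) b1) ∈ Iq Q := by
        have := (Ideal.Quotient.eq).1 h'
        rwa [← mul_sub] at this
      have := X0_mul_mem Q hQ0 hmem2
      exact ih b1 ((Ideal.Quotient.eq).2 this)

end Final


section MainProof

open LaurentPolynomial

lemma algMap_mk (Q : R2) (c : ℂ) :
    algebraMap ℂ (danRing Q 1) c = Ideal.Quotient.mk (Iq Q) (C c) := by
  have h := (Ideal.Quotient.mkₐ ℂ (Iq Q)).commutes c
  rw [Ideal.Quotient.mkₐ_eq_mk] at h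
  rw [← h, MvPolynomial.algebraMap_eq]

/-- For `n = 1`, the Makar-Limanov invariant of `S_{Q,1}` is `ℂ`. -/
theorem stmt_0 (Q : R2) (hQ : 2 ≤ (Q0 Q).natDegree) :
    {a : danRing Q 1 |
        ∀ δ : Derivation ℂ (danRing Q 1) (danRing Q 1), IsLND δ → δ a = 0} =
      Set.range (algebraMap ℂ (danRing Q 1)) := by
  have hQ0 : Q0 Q ≠ 0 := by
    intro h
    rw [h, Polynomial.natDegree_zero] at hQ
    omega
  obtain ⟨r, hr⟩ := exists_r Q
  have h1 : del1 Q (danPoly Q 1) = 0 := del1_danPoly Q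
  have h2 : del2 (Q0 Q) r (danPoly Q 1) = 0 := del2_danPoly Q (Q0 Q) r hr
  apply Set.eq_of_subset_of_subset
  · intro a ha
    simp only [Set.mem_setOf_eq] at ha
    obtain ⟨f, rfl⟩ := Ideal.Quotient.mk_surjective (I := Iq Q) a
    -- Step 1: use the first derivation to show psi Q f has zero derivative
    have e1 : qDer Q (del1 Q) h1 (Ideal.Quotient.mk (Iq Q) f) = 0 :=
      ha _ (qDer_isLND Q _ h1 (del1_nilp Q))
    rw [qDer_mk] at e1
    have m1 : del1 Q f ∈ Iq Q := (Ideal.Quotient.eq_zero_iff_mem).1 e1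
    have hP : psi Q (del1 Q f) = 0 := psi_mem_ker Q m1
    rw [psi_del1] at hP
    have hder : Polynomial.derivative (psi Q f) = 0 := by
      rcases mul_eq_zero.1 hP with h | h
      · exact absurd h CT1_ne
      · exact h
    have hCc : psi Q f = Polynomial.C ((psi Q f).coeff 0) :=
      Polynomial.eq_C_of_derivative_eq_zero hder
    obtain ⟨n, b0, hb0⟩ := LaurentPolynomial.exists_T_pow ((psi Q f).coeff 0)
    have hker : psi Q (X 0 ^ n * f - Polynomial.aeval (X 0 : R3) b0) = 0 := by
      rw [map_sub, map_mul, map_pow, psi_X0, psi_paevalX0, hb0, hCc,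
        Polynomial.coeff_C_zero, ← Polynomial.C_pow, T_pow, mul_one, ← Polynomial.C_mul,
        mul_comm (T (n : ℤ)), sub_self]
    have hstripped : Ideal.Quotient.mk (Iq Q) (X 0 ^ n * f)
        = Ideal.Quotient.mk (Iq Q) (Polynomial.aeval (X 0 : R3) b0) :=
      (Ideal.Quotient.eq).2 (psi_ker Q hQ0 hker)
    obtain ⟨b, hb⟩ := strip Q hQ f n b0 hstripped
    -- Step 2: use the second derivation to show b is constant
    have e2 : qDer Q (del2 (Q0 Q) r) h2 (Ideal.Quotient.mk (Iq Q) f) = 0 :=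
      ha _ (qDer_isLND Q _ h2 (del2_nilp (Q0 Q) r))
    rw [hb, qDer_mk] at e2
    have m2 : del2 (Q0 Q) r (Polynomial.aeval (X 0 : R3) b) ∈ Iq Q :=
      (Ideal.Quotient.eq_zero_iff_mem).1 e2
    have hps : psi Q (del2 (Q0 Q) r (Polynomial.aeval (X 0 : R3) b)) = 0 := psi_mem_ker Q m2
    rw [der_paeval, del2_X0, map_mul, psi_paevalX0, psi_Pz] at hps
    have hpd : Polynomial.map (algebraMap ℂ LL) (Polynomial.derivative (Q0 Q)) ≠ 0 := by
      have hp' : Polynomial.derivative (Q0 Q) ≠ 0 := by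
        intro h
        have := Polynomial.natDegree_eq_zero_of_derivative_eq_zero h
        omega
      intro h
      exact hp' ((Polynomial.map_eq_zero_iff (RingHom.injective (algebraMap ℂ LL))).1 h)
    have hbder : Polynomial.derivative b = 0 := by
      rcases mul_eq_zero.1 hps with h | h
      · exact Polynomial.toLaurent_injective
          (by rw [map_zero]; exact (Polynomial.C_eq_zero).1 h)
      · exact absurd h hpd
    have hbC : b = Polynomial.C (b.coeff 0) := Polynomial.eq_C_of_derivative_eq_zero hbder
    refine ⟨b.coeff 0, ?_⟩
    rw [algMap_mk, hb]
    congr 1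
    conv_rhs => rw [hbC]
    rw [Polynomial.aeval_C, MvPolynomial.algebraMap_eq]
  · rintro a ⟨c, rfl⟩
    intro δ _
    exact δ.map_algebraMap c

end MainProof
end
end

section
/- Let n ≥ 1 be an integer and Q ∈ ℂ[x,z] with deg_z Q(0,z) ≥ 2. Then there exists a polynomial Q'(x,z) ∈ ℂ[x,z] with deg_z Q'(0,z) ≥ 2 such that X_{Q',n} is in reduced standard form and the coordinate rings S_{Q,n} and S_{Q',n} are isomorphic as ℂ-algebras. -/
open MvPolynomial

noncomputable section

namespace Stmt12Aux

abbrev T := Polynomial (Polynomial ℂ)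

/-- x as element of T -/
def tx : T := Polynomial.C Polynomial.X

def Fm : T →ₐ[ℂ] R2 := Polynomial.aevalTower (Polynomial.aeval (X 0)) (X 1)
def Gm : R2 →ₐ[ℂ] T := aeval ![tx, Polynomial.X]

@[simp] lemma Fm_C (a : Polynomial ℂ) : Fm (Polynomial.C a) = Polynomial.aeval (X 0) a :=
  Polynomial.aevalTower_C _ _ _

@[simp] lemma Fm_X : Fm Polynomial.X = X 1 := Polynomial.aevalTower_X _ _

@[simp] lemma Fm_tx : Fm tx = X 0 := by simp [tx]

@[simp] lemma Gm_X0 : Gm (X 0) = tx := by simp [Gm]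

@[simp] lemma Gm_X1 : Gm (X 1) = Polynomial.X := by simp [Gm]

lemma Fm_Gm (Q : R2) : Fm (Gm Q) = Q := by
  have : Fm.comp Gm = AlgHom.id ℂ R2 := by
    apply MvPolynomial.algHom_ext
    intro i
    fin_cases i <;> simp
  exact congrArg (fun f => f Q) (congrArg DFunLike.coe this)

lemma Gm_Fm (t : T) : Gm (Fm t) = t := by
  have : Gm.comp Fm = AlgHom.id ℂ T := by
    apply Polynomial.algHom_ext'
    · apply Polynomial.algHom_ext
      simp [tx]
    · simp
  exact congrArg (fun f => f t) (congrArg DFunLike.coe this)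

end Stmt12Aux

namespace Stmt12Aux

def ev0 : Polynomial ℂ →ₐ[ℂ] ℂ := Polynomial.aeval 0
def mp0 : T →ₐ[ℂ] Polynomial ℂ := Polynomial.mapAlgHom ev0

lemma ev0_apply (a : Polynomial ℂ) : ev0 a = a.coeff 0 := by
  simp [ev0, ← Polynomial.coeff_zero_eq_eval_zero]

lemma mp0_coeff (t : T) (k : ℕ) : (mp0 t).coeff k = (t.coeff k).coeff 0 := by
  simp [mp0, Polynomial.coe_mapAlgHom, Polynomial.coeff_map, ev0_apply]

lemma Q0_Fm (t : T) : Q0 (Fm t) = mp0 t := by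
  have h : (aeval (R := ℂ) ![(0 : Polynomial ℂ), Polynomial.X]).comp Fm = mp0 := by
    apply Polynomial.algHom_ext'
    · apply Polynomial.algHom_ext
      simp [mp0, ev0]
    · simp [mp0]
  exact congrArg (fun f => f t) (congrArg DFunLike.coe h)

lemma degreeOf_monomial_le (i : Fin 2) (s : Fin 2 →₀ ℕ) (c : ℂ) :
    degreeOf i (monomial s c) ≤ s i := by
  classical
  by_cases hc : c = 0
  · simp [hc]
  · rw [degreeOf_le_iff]
    intro m hm
    rw [support_monomial, if_neg hc] at hm
    simp only [Finset.mem_singleton] at hm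
    subst hm
    exact le_rfl

end Stmt12Aux

namespace Stmt12Aux

lemma degreeOf_aeval_X0 (a : Polynomial ℂ) (i : Fin 2) :
    degreeOf i (Polynomial.aeval (X 0 : R2) a) ≤ if i = 0 then a.natDegree else 0 := by
  classical
  conv_lhs => rw [a.as_sum_support]
  rw [map_sum]
  refine le_trans (degreeOf_sum_le _ _ _) (Finset.sup_le ?_)
  intro j hj
  rw [Polynomial.aeval_monomial, X_pow_eq_monomial]
  have h1 : (algebraMap ℂ R2) (a.coeff j) = C (a.coeff j) := rfl
  rw [h1, C_mul_monomial]
  refine le_trans (degreeOf_monomial_le _ _ _) ?_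
  by_cases hi : i = 0
  · subst hi
    simp only [Finsupp.single_eq_same, if_pos rfl]
    exact Polynomial.le_natDegree_of_mem_supp _ hj
  · simp [Finsupp.single_eq_of_ne (fun h => hi h.symm), hi]

lemma degreeOf1_aeval_X0 (a : Polynomial ℂ) :
    degreeOf 1 (Polynomial.aeval (X 0 : R2) a) = 0 :=
  Nat.le_zero.mp (by simpa using degreeOf_aeval_X0 a 1)

lemma degreeOf0_aeval_X0 (a : Polynomial ℂ) :
    degreeOf 0 (Polynomial.aeval (X 0 : R2) a) ≤ a.natDegree := by
  simpa using degreeOf_aeval_X0 a 0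

lemma Fm_monomial (k : ℕ) (a : Polynomial ℂ) :
    Fm (Polynomial.monomial k a) = Polynomial.aeval (X 0 : R2) a * X 1 ^ k := by
  rw [← Polynomial.C_mul_X_pow_eq_monomial, map_mul, map_pow, Fm_C, Fm_X]

lemma degreeOf1_X1pow (k : ℕ) : degreeOf 1 ((X 1 : R2) ^ k) ≤ k := by
  rw [X_pow_eq_monomial]
  simpa using degreeOf_monomial_le 1 (Finsupp.single 1 k) 1

lemma degreeOf0_X1pow (k : ℕ) : degreeOf 0 ((X 1 : R2) ^ k) = 0 := by
  rw [X_pow_eq_monomial]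
  exact Nat.le_zero.mp (by simpa using degreeOf_monomial_le 0 (Finsupp.single 1 k) 1)

lemma degreeOf1_Fm (t : T) : degreeOf 1 (Fm t) ≤ t.natDegree := by
  conv_lhs => rw [t.as_sum_support, map_sum]
  refine le_trans (degreeOf_sum_le _ _ _) (Finset.sup_le ?_)
  intro j hj
  rw [Fm_monomial]
  refine le_trans (degreeOf_mul_le _ _ _) ?_
  have := degreeOf1_aeval_X0 (t.coeff j)
  have h2 := degreeOf1_X1pow j
  have h3 : j ≤ t.natDegree := Polynomial.le_natDegree_of_mem_supp _ hj
  omega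

lemma degreeOf0_Fm (t : T) (m : ℕ) (h : ∀ k, (t.coeff k).natDegree ≤ m) :
    degreeOf 0 (Fm t) ≤ m := by
  conv_lhs => rw [t.as_sum_support, map_sum]
  refine le_trans (degreeOf_sum_le _ _ _) (Finset.sup_le ?_)
  intro j hj
  rw [Fm_monomial]
  refine le_trans (degreeOf_mul_le _ _ _) ?_
  have := degreeOf0_aeval_X0 (t.coeff j)
  have h2 := degreeOf0_X1pow j
  have h3 := h j
  omega

end Stmt12Aux

namespace Stmt12Aux

lemma coeff_sum_monomial (t : T) (φ : Polynomial ℂ → Polynomial ℂ) (hφ : φ 0 = 0) (m : ℕ) :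
    (t.sum fun k a => Polynomial.monomial k (φ a)).coeff m = φ (t.coeff m) := by
  classical
  rw [Polynomial.coeff_sum, Polynomial.sum_def]
  simp only [Polynomial.coeff_monomial]
  rw [Finset.sum_ite_eq' t.support m (fun k => φ (t.coeff k))]
  by_cases hm : m ∈ t.support
  · rw [if_pos hm]
  · rw [if_neg hm]
    rw [Polynomial.notMem_support_iff.mp hm, hφ]

def decompQ (t : T) : T := t.sum fun k a => Polynomial.monomial k a.divX

lemma decompQ_coeff (t : T) (k : ℕ) : (decompQ t).coeff k = (t.coeff k).divX :=
  coeff_sum_monomial t _ (by simp) k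

lemma decomp_eq (t : T) (p : Polynomial ℂ) (hp : mp0 t = p) :
    t = Polynomial.map Polynomial.C p + tx * decompQ t := by
  refine Polynomial.ext fun m => ?_
  rw [Polynomial.coeff_add, Polynomial.coeff_map, tx, Polynomial.coeff_C_mul, decompQ_coeff]
  have h0 : p.coeff m = (t.coeff m).coeff 0 := by rw [← hp, mp0_coeff]
  rw [h0]
  have := Polynomial.X_mul_divX_add (t.coeff m)
  linear_combination -this

lemma decompQ_degree_lt (t : T) (p : Polynomial ℂ) (m : ℕ)
    (h : ∀ k, m ≤ k → t.coeff k = Polynomial.C (p.coeff k)) :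
    (decompQ t).degree < m := by
  rw [Polynomial.degree_lt_iff_coeff_zero]
  intro j hj
  rw [decompQ_coeff, h j (by exact_mod_cast hj), Polynomial.divX_C]

def truncLow (t : T) (n : ℕ) : T := t.sum fun k a => Polynomial.monomial k (a %ₘ Polynomial.X ^ n)
def truncHigh (t : T) (n : ℕ) : T := t.sum fun k a => Polynomial.monomial k (a /ₘ Polynomial.X ^ n)

lemma truncLow_coeff (t : T) (n k : ℕ) :
    (truncLow t n).coeff k = t.coeff k %ₘ Polynomial.X ^ n :=
  coeff_sum_monomial t _ (by simp) k

lemma trunc_eq (t : T) (n : ℕ) : t = tx ^ n * truncHigh t n + truncLow t n := by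
  refine Polynomial.ext fun m => ?_
  rw [Polynomial.coeff_add, truncLow_coeff, tx, ← Polynomial.C_pow, Polynomial.coeff_C_mul,
    truncHigh]
  rw [coeff_sum_monomial t _ (by simp) m]
  have := Polynomial.modByMonic_add_div (t.coeff m) (Polynomial.X ^ n)
  linear_combination -this

lemma natDegree_modX (a : Polynomial ℂ) (n : ℕ) (hn : 1 ≤ n) :
    (a %ₘ Polynomial.X ^ n).natDegree < n := by
  have h := Polynomial.degree_modByMonic_lt a (Polynomial.monic_X_pow (n := n) (R := ℂ))
  rw [Polynomial.degree_X_pow] at h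
  by_cases h0 : a %ₘ Polynomial.X ^ n = 0
  · rw [h0]; simpa using (Nat.pos_of_ne_zero (by omega) : 0 < n)
  · exact Polynomial.natDegree_lt_iff_degree_lt h0 |>.mpr h

lemma modX_C (c : ℂ) (n : ℕ) (hn : 1 ≤ n) :
    Polynomial.C c %ₘ Polynomial.X ^ n = Polynomial.C c := by
  rw [Polynomial.modByMonic_eq_self_iff (Polynomial.monic_X_pow (n := n))]
  rw [Polynomial.degree_X_pow]
  exact lt_of_le_of_lt Polynomial.degree_C_le (by exact_mod_cast hn)

end Stmt12Aux

namespace Stmt12Aux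

lemma theta_toXYZ (w : R3) (q : R2) :
    (aeval ![X 0, w, X 2] : R3 →ₐ[ℂ] R3) (toXYZ q) = toXYZ q := by
  have h : ((aeval ![X 0, w, X 2] : R3 →ₐ[ℂ] R3)).comp toXYZ = toXYZ := by
    rw [toXYZ, comp_aeval]
    congr 1
    funext i
    fin_cases i <;> simp
  exact congrArg (fun f => f q) (congrArg DFunLike.coe h)

lemma theta_toXYZ_bind (w : R3) (q : R2) :
    (bind₁ ![X 0, w, X 2]) (toXYZ q) = toXYZ q := theta_toXYZ w q

lemma aeval_polyX0 (v : Fin 3 → R3) (h0 : v 0 = X 0) (b : Polynomial ℂ) :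
    (aeval v) (Polynomial.aeval (X 0 : R3) b) = Polynomial.aeval (X 0 : R3) b := by
  rw [← Polynomial.aeval_algHom_apply, aeval_X, h0]

lemma bind1_polyX0 (v : Fin 3 → R3) (h0 : v 0 = X 0) (b : Polynomial ℂ) :
    (bind₁ v) (Polynomial.aeval (X 0 : R3) b) = Polynomial.aeval (X 0 : R3) b :=
  aeval_polyX0 v h0 b

def autY (h : R2) : R3 ≃ₐ[ℂ] R3 :=
  AlgEquiv.ofAlgHom (aeval ![X 0, X 1 + toXYZ h, X 2]) (aeval ![X 0, X 1 - toXYZ h, X 2])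
    (by
      apply MvPolynomial.algHom_ext
      intro i
      fin_cases i <;> simp [theta_toXYZ, theta_toXYZ_bind])
    (by
      apply MvPolynomial.algHom_ext
      intro i
      fin_cases i <;> simp [theta_toXYZ, theta_toXYZ_bind])

def isoOfAut {Q Q' : R2} {n : ℕ} (Φ : R3 ≃ₐ[ℂ] R3) (h : Φ (danPoly Q n) = danPoly Q' n) :
    danRing Q n ≃ₐ[ℂ] danRing Q' n :=
  Ideal.quotientEquivAlg _ _ Φ (by
    rw [Ideal.map_span, Set.image_singleton]
    exact congrArg (fun s => Ideal.span {s}) h.symm)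

lemma isoA (Q h : R2) (n : ℕ) :
    Nonempty (danRing (Q + X 0 ^ n * h) n ≃ₐ[ℂ] danRing Q n) := by
  refine ⟨isoOfAut (autY h) ?_⟩
  show (aeval ![X 0, X 1 + toXYZ h, X 2] : R3 →ₐ[ℂ] R3) (danPoly _ n) = danPoly Q n
  rw [danPoly, danPoly, map_sub, map_mul, map_pow, theta_toXYZ, map_add, map_mul, map_pow]
  simp only [aeval_X, Matrix.cons_val_zero, Matrix.cons_val_one, Matrix.head_cons]
  have hx : toXYZ (X 0 : R2) = X 0 := by simp [toXYZ]
  rw [hx]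
  ring

def autZ (b : Polynomial ℂ) : R3 ≃ₐ[ℂ] R3 :=
  AlgEquiv.ofAlgHom (aeval ![X 0, X 1, X 2 + X 0 * Polynomial.aeval (X 0 : R3) b])
    (aeval ![X 0, X 1, X 2 - X 0 * Polynomial.aeval (X 0 : R3) b])
    (by
      apply MvPolynomial.algHom_ext
      intro i
      fin_cases i <;> simp [aeval_polyX0, bind1_polyX0,
        bind1_polyX0 ![X 0, X 1, X 2 + X 0 * Polynomial.aeval (X 0 : R3) b] rfl])
    (by
      apply MvPolynomial.algHom_ext
      intro i
      fin_cases i <;> simp [aeval_polyX0, bind1_polyX0,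
        bind1_polyX0 ![X 0, X 1, X 2 - X 0 * Polynomial.aeval (X 0 : R3) b] rfl])

lemma zmove_key (b : Polynomial ℂ) (Q : R2) :
    (aeval ![X 0, X 1, X 2 + X 0 * Polynomial.aeval (X 0 : R3) b] : R3 →ₐ[ℂ] R3) (toXYZ Q)
      = toXYZ (aeval ![X 0, X 1 + X 0 * Polynomial.aeval (X 0 : R2) b] Q) := by
  have h : ((aeval ![X 0, X 1, X 2 + X 0 * Polynomial.aeval (X 0 : R3) b] : R3 →ₐ[ℂ] R3)).comp toXYZ
      = toXYZ.comp (aeval ![X 0, X 1 + X 0 * Polynomial.aeval (X 0 : R2) b]) := by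
    rw [toXYZ, comp_aeval, comp_aeval]
    congr 1
    funext i
    fin_cases i
    · simp
    · show (aeval ![X 0, X 1, X 2 + X 0 * Polynomial.aeval (X 0 : R3) b] : R3 →ₐ[ℂ] R3) (X 2)
        = (aeval ![X 0, X 2] : R2 →ₐ[ℂ] R3) (X 1 + X 0 * Polynomial.aeval (X 0 : R2) b)
      rw [map_add, map_mul, ← Polynomial.aeval_algHom_apply]
      simp
  exact congrArg (fun f => f Q) (congrArg DFunLike.coe h)

lemma isoZ (Q : R2) (b : Polynomial ℂ) (n : ℕ) :
    Nonempty (danRing Q n ≃ₐ[ℂ] danRing (aeval ![X 0, X 1 + X 0 * Polynomial.aeval (X 0 : R2) b] Q) n) := by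
  refine ⟨isoOfAut (autZ b) ?_⟩
  show (aeval ![X 0, X 1, X 2 + X 0 * Polynomial.aeval (X 0 : R3) b] : R3 →ₐ[ℂ] R3) (danPoly Q n) = _
  rw [danPoly, danPoly, map_sub, map_mul, map_pow, zmove_key]
  simp

end Stmt12Aux

namespace Stmt12Aux

@[simp] lemma toXYZ_X0 : toXYZ (X 0) = (X 0 : R3) := by simp [toXYZ]
@[simp] lemma toXYZ_X1 : toXYZ (X 1) = (X 2 : R3) := by simp [toXYZ]

lemma danProj_eq_zero {Q : R2} {n : ℕ} {a : R3} (h : danPoly Q n ∣ a) : danProj Q n a = 0 := by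
  have ha : a ∈ Ideal.span {danPoly Q n} := Ideal.mem_span_singleton.mpr h
  show Ideal.Quotient.mkₐ ℂ _ a = 0
  rw [Ideal.Quotient.mkₐ_eq_mk]
  exact Ideal.Quotient.eq_zero_iff_mem.mpr ha

lemma danProj_congr {Q : R2} {n : ℕ} {a b : R3} (h : danPoly Q n ∣ a - b) :
    danProj Q n a = danProj Q n b := by
  have := danProj_eq_zero h
  rw [map_sub, sub_eq_zero] at this
  exact this

def liftDan {Q : R2} {n : ℕ} {B : Type} [CommRing B] [Algebra ℂ B] (f : R3 →ₐ[ℂ] B)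
    (h : f (danPoly Q n) = 0) : danRing Q n →ₐ[ℂ] B :=
  Ideal.Quotient.liftₐ _ f (fun a ha => by
    obtain ⟨c, hc⟩ := Ideal.mem_span_singleton.mp ha
    rw [hc, map_mul, h, zero_mul])

lemma liftDan_comp {Q : R2} {n : ℕ} {B : Type} [CommRing B] [Algebra ℂ B] (f : R3 →ₐ[ℂ] B)
    (h : f (danPoly Q n) = 0) : (liftDan f h).comp (danProj Q n) = f :=
  Ideal.Quotient.liftₐ_comp _ _ _

lemma liftDan_apply {Q : R2} {n : ℕ} {B : Type} [CommRing B] [Algebra ℂ B] (f : R3 →ₐ[ℂ] B)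
    (h : f (danPoly Q n) = 0) (a : R3) : liftDan f h (danProj Q n a) = f a :=
  congrArg (fun g => g a) (congrArg DFunLike.coe (liftDan_comp f h))

lemma isoM (Q v : R2) (n : ℕ) :
    Nonempty (danRing Q n ≃ₐ[ℂ] danRing ((1 - X 0 * v) * Q) n) := by
  set V : R3 := toXYZ v with hV
  set TQ : R3 := toXYZ Q with hTQ
  set S : R3 := ∑ i ∈ Finset.range n, (X 0 * V) ^ i with hS
  have gs : S * (1 - X 0 * V) = 1 - (X 0 * V) ^ n := by
    have h := geom_sum_mul (X 0 * V) n
    linear_combination -h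
  have hQ' : toXYZ ((1 - X 0 * v) * Q) = (1 - X 0 * V) * TQ := by
    rw [map_mul, map_sub, map_one, map_mul, toXYZ_X0, hV, hTQ]
  -- the two substitution homomorphisms
  set w1 : R3 := (1 - X 0 * V) * X 1 with hw1
  set w2 : R3 := X 1 * S + V ^ n * TQ with hw2
  have theta_V : ∀ w : R3, (aeval ![X 0, w, X 2] : R3 →ₐ[ℂ] R3) V = V := fun w => theta_toXYZ w v
  have theta_TQ : ∀ w : R3, (aeval ![X 0, w, X 2] : R3 →ₐ[ℂ] R3) TQ = TQ := fun w => theta_toXYZ w Q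
  have theta_X0 : ∀ w : R3, (aeval ![X 0, w, X 2] : R3 →ₐ[ℂ] R3) (X 0) = X 0 := by
    intro w; simp
  have theta_X1 : ∀ w : R3, (aeval ![X 0, w, X 2] : R3 →ₐ[ℂ] R3) (X 1) = w := by
    intro w; simp
  have theta_S : ∀ w : R3, (aeval ![X 0, w, X 2] : R3 →ₐ[ℂ] R3) S = S := by
    intro w
    rw [hS, map_sum]
    refine Finset.sum_congr rfl fun i _ => ?_
    rw [map_pow, map_mul, theta_X0, theta_V]
  have hφ0 : (aeval ![X 0, w1, X 2] : R3 →ₐ[ℂ] R3) (danPoly ((1 - X 0 * v) * Q) n)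
      = (1 - X 0 * V) * danPoly Q n := by
    rw [danPoly, map_sub, map_mul, map_pow, theta_toXYZ, hQ', theta_X0, theta_X1, danPoly, hw1,
      ← hTQ]
    ring
  have hψ0 : (aeval ![X 0, w2, X 2] : R3 →ₐ[ℂ] R3) (danPoly Q n) = S * danPoly ((1 - X 0 * v) * Q) n := by
    rw [danPoly, map_sub, map_mul, map_pow, theta_toXYZ, theta_X0, theta_X1, danPoly, hQ', hw2,
      ← hTQ]
    linear_combination TQ * gs
  set φhom : R3 →ₐ[ℂ] danRing Q n := (danProj Q n).comp (aeval ![X 0, w1, X 2]) with hφhom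
  set ψhom : R3 →ₐ[ℂ] danRing ((1 - X 0 * v) * Q) n :=
    (danProj ((1 - X 0 * v) * Q) n).comp (aeval ![X 0, w2, X 2]) with hψhom
  have φz : φhom (danPoly ((1 - X 0 * v) * Q) n) = 0 := by
    rw [hφhom, AlgHom.comp_apply, hφ0]
    exact danProj_eq_zero (dvd_mul_left _ _)
  have ψz : ψhom (danPoly Q n) = 0 := by
    rw [hψhom, AlgHom.comp_apply, hψ0]
    exact danProj_eq_zero (dvd_mul_left _ _)
  refine ⟨AlgEquiv.ofAlgHom (liftDan ψhom ψz) (liftDan φhom φz) ?_ ?_⟩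
  · apply Ideal.Quotient.algHom_ext
    rw [AlgHom.comp_assoc]
    have e1 : (liftDan φhom φz).comp (Ideal.Quotient.mkₐ ℂ _) = φhom := liftDan_comp _ _
    rw [e1]
    apply MvPolynomial.algHom_ext
    intro i
    fin_cases i
    · show (liftDan ψhom ψz) ((danProj Q n) ((aeval ![X 0, w1, X 2]) (X 0)))
        = danProj ((1 - X 0 * v) * Q) n (X 0)
      rw [theta_X0, liftDan_apply, hψhom, AlgHom.comp_apply, theta_X0]
    · show (liftDan ψhom ψz) ((danProj Q n) ((aeval ![X 0, w1, X 2]) (X 1)))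
        = danProj ((1 - X 0 * v) * Q) n (X 1)
      have key : (aeval ![X 0, w2, X 2] : R3 →ₐ[ℂ] R3) w1 = (1 - X 0 * V) * w2 := by
        rw [hw1, map_mul, map_sub, map_one, map_mul, theta_X0, theta_V, theta_X1]
      rw [theta_X1, liftDan_apply, hψhom, AlgHom.comp_apply, key]
      apply danProj_congr
      refine ⟨-(V ^ n), ?_⟩
      rw [danPoly, hQ', hw2]
      linear_combination (X 1 : R3) * gs
    · have h2 : ∀ w : R3, (aeval ![X 0, w, X 2] : R3 →ₐ[ℂ] R3) (X 2) = X 2 := by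
        intro w; simp
      show (liftDan ψhom ψz) ((danProj Q n) ((aeval ![X 0, w1, X 2]) (X 2)))
        = danProj ((1 - X 0 * v) * Q) n (X 2)
      rw [h2, liftDan_apply, hψhom, AlgHom.comp_apply, h2]
  · apply Ideal.Quotient.algHom_ext
    rw [AlgHom.comp_assoc]
    have e1 : (liftDan ψhom ψz).comp (Ideal.Quotient.mkₐ ℂ _) = ψhom := liftDan_comp _ _
    rw [e1]
    apply MvPolynomial.algHom_ext
    intro i
    fin_cases i
    · show (liftDan φhom φz) ((danProj ((1 - X 0 * v) * Q) n) ((aeval ![X 0, w2, X 2]) (X 0)))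
        = danProj Q n (X 0)
      rw [theta_X0, liftDan_apply, hφhom, AlgHom.comp_apply, theta_X0]
    · show (liftDan φhom φz) ((danProj ((1 - X 0 * v) * Q) n) ((aeval ![X 0, w2, X 2]) (X 1)))
        = danProj Q n (X 1)
      have key : (aeval ![X 0, w1, X 2] : R3 →ₐ[ℂ] R3) w2 = w1 * S + V ^ n * TQ := by
        rw [hw2, map_add, map_mul, map_mul, map_pow, theta_X1, theta_S, theta_V, theta_TQ]
      rw [theta_X1, liftDan_apply, hφhom, AlgHom.comp_apply, key]
      apply danProj_congr
      refine ⟨-(V ^ n), ?_⟩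
      rw [danPoly, hw1]
      linear_combination (X 1 : R3) * gs
    · have h2 : ∀ w : R3, (aeval ![X 0, w, X 2] : R3 →ₐ[ℂ] R3) (X 2) = X 2 := by
        intro w; simp
      show (liftDan φhom φz) ((danProj ((1 - X 0 * v) * Q) n) ((aeval ![X 0, w2, X 2]) (X 2)))
        = danProj Q n (X 2)
      rw [h2, liftDan_apply, hφhom, AlgHom.comp_apply, h2]

end Stmt12Aux

namespace Stmt12Aux

lemma txmul_degree (j : ℕ) (u : T) : (tx ^ j * u).degree ≤ u.degree := by
  refine (Polynomial.degree_mul_le _ _).trans ?_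
  rw [tx, ← Polynomial.C_pow]
  calc (Polynomial.C (Polynomial.X ^ j) : T).degree + u.degree
      ≤ 0 + u.degree := add_le_add Polynomial.degree_C_le le_rfl
    _ = u.degree := zero_add _

lemma div_step (p : Polynomial ℂ) (hp : p ≠ 0) (s : T) :
    ∃ g u : T, s = Polynomial.map Polynomial.C p * g + u ∧
      u.degree < (p.natDegree : WithBot ℕ) := by
  set c := p.leadingCoeff with hc
  set PM : T := Polynomial.map (Polynomial.C : ℂ →+* Polynomial ℂ) (p * Polynomial.C c⁻¹) with hPM
  have hmonic : PM.Monic := (Polynomial.monic_mul_leadingCoeff_inv hp).map _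
  have hdegPM : PM.degree = (p.natDegree : WithBot ℕ) := by
    rw [hPM, (Polynomial.monic_mul_leadingCoeff_inv hp).degree_map,
      Polynomial.degree_mul_leadingCoeff_inv _ hp, Polynomial.degree_eq_natDegree hp]
  have hdiv := Polynomial.modByMonic_add_div s PM
  refine ⟨Polynomial.C (Polynomial.C c⁻¹) * (s /ₘ PM), s %ₘ PM, ?_, ?_⟩
  · have hPM' : PM = Polynomial.map Polynomial.C p * Polynomial.C (Polynomial.C c⁻¹) := by
      rw [hPM, Polynomial.map_mul, Polynomial.map_C]
    linear_combination -hdiv + (s /ₘ PM) * hPM'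
  · rw [← hdegPM]
    exact Polynomial.degree_modByMonic_lt s hmonic

lemma reduce_high (n : ℕ) (p : Polynomial ℂ) (hp : p ≠ 0) :
    ∀ m k : ℕ, ∀ r s : T, k + m = n → 1 ≤ k → r.degree < (p.natDegree : WithBot ℕ) →
    ∃ r' : T, r'.degree < (p.natDegree : WithBot ℕ) ∧
      Nonempty (danRing (Fm (Polynomial.map Polynomial.C p + tx * r + tx ^ k * s)) n ≃ₐ[ℂ]
        danRing (Fm (Polynomial.map Polynomial.C p + tx * r')) n) := by
  intro m
  induction m with
  | zero =>
    intro k r s hk hk1 hr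
    refine ⟨r, hr, ?_⟩
    have hk' : k = n := by omega
    subst hk'
    have he : Fm (Polynomial.map Polynomial.C p + tx * r + tx ^ k * s)
        = Fm (Polynomial.map Polynomial.C p + tx * r) + X 0 ^ k * Fm s := by
      rw [map_add, map_mul, map_pow, Fm_tx]
    rw [he]
    exact isoA _ _ k
  | succ m ih =>
    intro k r s hk hk1 hr
    obtain ⟨k', rfl⟩ : ∃ k', k = k' + 1 := ⟨k - 1, by omega⟩
    obtain ⟨g, u, hsu, hu⟩ := div_step p hp s
    set r₂ : T := r + tx ^ k' * u with hr₂
    set s₂ : T := -(g * r + tx ^ k' * (g * s)) with hs₂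
    have hr₂deg : r₂.degree < (p.natDegree : WithBot ℕ) := by
      rw [hr₂]
      refine lt_of_le_of_lt (Polynomial.degree_add_le _ _) (max_lt hr ?_)
      exact lt_of_le_of_lt (txmul_degree k' u) hu
    have hkey : (1 - X 0 * Fm (tx ^ k' * g)) * Fm (Polynomial.map Polynomial.C p + tx * r + tx ^ (k' + 1) * s)
        = Fm (Polynomial.map Polynomial.C p + tx * r₂ + tx ^ (k' + 1 + 1) * s₂) := by
      have hT : (1 - tx ^ (k' + 1) * g) * (Polynomial.map Polynomial.C p + tx * r + tx ^ (k' + 1) * s)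
          = Polynomial.map Polynomial.C p + tx * r₂ + tx ^ (k' + 1 + 1) * s₂ := by
        rw [hr₂, hs₂]
        linear_combination (tx : T) ^ (k' + 1) * hsu
      calc (1 - X 0 * Fm (tx ^ k' * g)) * Fm (Polynomial.map Polynomial.C p + tx * r + tx ^ (k' + 1) * s)
          = Fm ((1 - tx ^ (k' + 1) * g) * (Polynomial.map Polynomial.C p + tx * r + tx ^ (k' + 1) * s)) := by
            simp only [map_mul, map_sub, map_one, map_pow, Fm_tx]
            ring
        _ = Fm (Polynomial.map Polynomial.C p + tx * r₂ + tx ^ (k' + 1 + 1) * s₂) := by rw [hT]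
    obtain ⟨r', hr', ⟨e2⟩⟩ := ih (k' + 1 + 1) r₂ s₂ (by omega) (by omega) hr₂deg
    obtain ⟨e1⟩ := isoM (Fm (Polynomial.map Polynomial.C p + tx * r + tx ^ (k' + 1) * s)) (Fm (tx ^ k' * g)) n
    rw [hkey] at e1
    exact ⟨r', hr', ⟨e1.trans e2⟩⟩

end Stmt12Aux

namespace Stmt12Aux

lemma Fm_taylor (b : Polynomial ℂ) (f : T) :
    Fm (Polynomial.taylor (Polynomial.X * b) f)
      = aeval ![X 0, X 1 + X 0 * Polynomial.aeval (X 0 : R2) b] (Fm f) := by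
  set e : Polynomial ℂ := Polynomial.X * b with he
  set τ : T →ₐ[ℂ] T :=
    (Polynomial.aeval (R := Polynomial ℂ) (Polynomial.X + Polynomial.C e)).restrictScalars ℂ with hτ
  have hτ_apply : ∀ t : T, τ t = Polynomial.taylor e t := by
    intro t
    rw [Polynomial.taylor_apply, hτ]
    simp only [AlgHom.coe_restrictScalars']
    rw [Polynomial.aeval_def, Polynomial.comp, Polynomial.algebraMap_eq]
  have hcomp : (aeval ![X 0, X 1 + X 0 * Polynomial.aeval (X 0 : R2) b] : R2 →ₐ[ℂ] R2).comp Fm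
      = Fm.comp τ := by
    apply Polynomial.algHom_ext'
    · apply Polynomial.algHom_ext
      -- check on tx
      show (aeval ![X 0, X 1 + X 0 * Polynomial.aeval (X 0 : R2) b]) (Fm tx) = Fm (τ tx)
      rw [hτ_apply, Fm_tx]
      have : Polynomial.taylor e tx = tx := by
        rw [tx, Polynomial.taylor_apply, Polynomial.C_comp]
      rw [this, Fm_tx]
      simp
    · show (aeval ![X 0, X 1 + X 0 * Polynomial.aeval (X 0 : R2) b]) (Fm Polynomial.X)
        = Fm (τ Polynomial.X)
      rw [hτ_apply, Fm_X]
      have : Polynomial.taylor e (Polynomial.X : T) = Polynomial.X + Polynomial.C e := by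
        rw [Polynomial.taylor_apply, Polynomial.X_comp]
      rw [this, map_add, Fm_X, Fm_C, he, map_mul]
      simp
  have := congrArg (fun h => h f) (congrArg DFunLike.coe hcomp)
  simp only [AlgHom.coe_comp, Function.comp_apply] at this
  rw [← hτ_apply, this]

end Stmt12Aux

namespace Stmt12Aux

lemma zshift (p : Polynomial ℂ) (hd : 2 ≤ p.natDegree) (r : T)
    (hr : r.degree < (p.natDegree : WithBot ℕ)) :
    ∃ (b : Polynomial ℂ) (g : T),
      Fm g = aeval ![X 0, X 1 + X 0 * Polynomial.aeval (X 0 : R2) b]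
        (Fm (Polynomial.map Polynomial.C p + tx * r)) ∧
      (∀ k, p.natDegree - 1 ≤ k → g.coeff k = Polynomial.C (p.coeff k)) := by
  set d := p.natDegree with hdd
  have hp0 : p ≠ 0 := fun h => by rw [h] at hdd; simp [hdd] at hd
  set c := p.leadingCoeff with hc
  set a : Polynomial ℂ := r.coeff (d - 1) with ha
  set b : Polynomial ℂ := Polynomial.C (-(((d : ℂ) * c)⁻¹)) * a with hb
  set e : Polynomial ℂ := Polynomial.X * b with he
  set f : T := Polynomial.map Polynomial.C p + tx * r with hf
  refine ⟨b, Polynomial.taylor e f, Fm_taylor b f, ?_⟩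
  have hdegP : (Polynomial.map (Polynomial.C : ℂ →+* Polynomial ℂ) p).natDegree = d :=
    Polynomial.natDegree_map_eq_of_injective Polynomial.C_injective p
  have hftxr : (tx * r).degree < (d : WithBot ℕ) :=
    lt_of_le_of_lt (by simpa using txmul_degree 1 r) hr
  have hfdeg : f.natDegree ≤ d := by
    rw [hf]
    refine le_trans (Polynomial.natDegree_add_le _ _) ?_
    rw [hdegP]
    exact max_le le_rfl (Polynomial.natDegree_le_iff_degree_le.mpr (le_of_lt hftxr))
  have hrd : r.coeff d = 0 := by
    apply Polynomial.coeff_eq_zero_of_degree_lt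
    exact_mod_cast hr
  have hfd : f.coeff d = Polynomial.C (p.coeff d) := by
    rw [hf, Polynomial.coeff_add, Polynomial.coeff_map, tx, Polynomial.coeff_C_mul, hrd,
      mul_zero, add_zero]
  have hfdm1 : f.coeff (d - 1) = Polynomial.C (p.coeff (d - 1)) + Polynomial.X * a := by
    rw [hf, Polynomial.coeff_add, Polynomial.coeff_map, tx, Polynomial.coeff_C_mul, ha]
  have hfk : ∀ k, d < k → f.coeff k = 0 := fun k hk =>
    Polynomial.coeff_eq_zero_of_natDegree_lt (lt_of_le_of_lt hfdeg hk)
  intro k hk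
  rcases lt_trichotomy k d with hlt | rfl | hgt
  · have hk' : k = d - 1 := by omega
    subst hk'
    rw [Polynomial.taylor_coeff]
    set w := Polynomial.hasseDeriv (d - 1) f with hw
    have hw1 : w.natDegree ≤ 1 := by
      refine le_trans (Polynomial.natDegree_hasseDeriv_le f (d - 1)) ?_
      omega
    have hw0 : w.coeff 0 = f.coeff (d - 1) := by
      rw [hw, Polynomial.hasseDeriv_coeff, zero_add, Nat.choose_self]
      simp
    have hwone : w.coeff 1 = (d : Polynomial ℂ) * f.coeff d := by
      rw [hw, Polynomial.hasseDeriv_coeff]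
      have h1 : 1 + (d - 1) = d := by omega
      rw [h1]
      have h2 : d.choose (d - 1) = d := by
        have h3 := Nat.choose_symm (show 1 ≤ d by omega) (n := d)
        rw [show d - 1 = d - 1 from rfl] at h3
        rw [h3, Nat.choose_one_right]
      rw [h2]
    have hev : Polynomial.eval e w = w.coeff 1 * e + w.coeff 0 := by
      conv_lhs => rw [Polynomial.eq_X_add_C_of_natDegree_le_one hw1]
      simp
    rw [hev, hwone, hw0, hfd, hfdm1]
    have hdc : ((d : ℂ)) * c ≠ 0 :=
      mul_ne_zero (Nat.cast_ne_zero.mpr (by omega)) (Polynomial.leadingCoeff_ne_zero.mpr hp0)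
    have hpc : p.coeff d = c := rfl
    have hs : (d : ℂ) * p.coeff d * (-(((d : ℂ) * c)⁻¹)) = -1 := by
      rw [hpc]
      field_simp
      rw [div_self hdc]
    have hC : (d : Polynomial ℂ) * Polynomial.C (p.coeff d) * Polynomial.C (-(((d : ℂ) * c)⁻¹))
        = -1 := by
      rw [← Polynomial.C_eq_natCast, ← map_mul, ← map_mul, hs]
      simp
    rw [he, hb]
    linear_combination (Polynomial.X * a) * hC
  · rw [Polynomial.taylor_coeff]
    have hH : Polynomial.hasseDeriv d f = Polynomial.C (f.coeff d) := by
      refine Polynomial.ext fun m => ?_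
      rw [Polynomial.hasseDeriv_coeff, Polynomial.coeff_C]
      cases m with
      | zero => simp
      | succ m =>
        rw [hfk (m + 1 + d) (by omega)]
        simp
    rw [hH, Polynomial.eval_C, hfd]
  · have h1 : (Polynomial.taylor e f).coeff k = 0 := by
      apply Polynomial.coeff_eq_zero_of_natDegree_lt
      rw [Polynomial.natDegree_taylor]
      omega
    have h2 : p.coeff k = 0 := Polynomial.coeff_eq_zero_of_natDegree_lt (by omega)
    rw [h1, h2, map_zero]

end Stmt12Aux

namespace Stmt12Aux

lemma Fm_P (p : Polynomial ℂ) :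
    Fm (Polynomial.map Polynomial.C p) = Polynomial.aeval (X 1 : R2) p := by
  have h : Fm.comp (Polynomial.mapAlgHom (Algebra.ofId ℂ (Polynomial ℂ)))
      = (Polynomial.aeval (X 1 : R2)).restrictScalars ℂ := by
    apply Polynomial.algHom_ext
    simp [Polynomial.coe_mapAlgHom]
  have := congrArg (fun f => f p) (congrArg DFunLike.coe h)
  simp only [AlgHom.coe_comp, Function.comp_apply, Polynomial.coe_mapAlgHom,
    AlgHom.coe_restrictScalars'] at this
  convert this using 2
  rfl

lemma mp0_P_add_tx (p : Polynomial ℂ) (q : T) :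
    mp0 (Polynomial.map Polynomial.C p + tx * q) = p := by
  refine Polynomial.ext fun k => ?_
  rw [mp0_coeff, Polynomial.coeff_add, Polynomial.coeff_map, tx, Polynomial.coeff_C_mul]
  simp [Polynomial.mul_coeff_zero]

lemma Q0_zsubst (b : Polynomial ℂ) (Q : R2) :
    Q0 (aeval ![X 0, X 1 + X 0 * Polynomial.aeval (X 0 : R2) b] Q) = Q0 Q := by
  have h : (aeval (R := ℂ) ![(0 : Polynomial ℂ), Polynomial.X]).comp
      (aeval ![X 0, X 1 + X 0 * Polynomial.aeval (X 0 : R2) b])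
      = aeval (R := ℂ) ![(0 : Polynomial ℂ), Polynomial.X] := by
    rw [comp_aeval]
    congr 1
    funext i
    fin_cases i
    · simp
    · show (aeval ![(0 : Polynomial ℂ), Polynomial.X])
          ((X 1 : R2) + X 0 * Polynomial.aeval (X 0 : R2) b) = Polynomial.X
      rw [map_add, map_mul]
      simp
  exact congrArg (fun f => f Q) (congrArg DFunLike.coe h)

lemma coeff0_modX (a : Polynomial ℂ) (n : ℕ) (hn : 1 ≤ n) :
    (a %ₘ Polynomial.X ^ n).coeff 0 = a.coeff 0 := by
  have h := Polynomial.modByMonic_add_div a (Polynomial.X ^ n : Polynomial ℂ)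
  have := congrArg (fun q => Polynomial.coeff q 0) h
  simp only [Polynomial.coeff_add, Polynomial.mul_coeff_zero, Polynomial.coeff_X_pow] at this
  rw [if_neg (by omega)] at this
  simpa using this

end Stmt12Aux


open Stmt12Aux in
/-- every Danielewski hypersurface is isomorphic to one in reduced
standard form. -/
theorem stmt_12 (n : ℕ) (hn : 1 ≤ n) (Q : R2) (hQ : 2 ≤ (Q0 Q).natDegree) :
    ∃ Q' : R2, 2 ≤ (Q0 Q').natDegree ∧ IsReducedStandardForm Q' n ∧
      Nonempty (danRing Q n ≃ₐ[ℂ] danRing Q' n) := by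
  classical
  set p := Q0 Q with hp
  have hp0 : p ≠ 0 := fun h => by simp [h] at hQ
  set d := p.natDegree with hd
  set P : T := Polynomial.map Polynomial.C p with hP
  set f0 : T := Gm Q with hf0
  have hmp0f0 : mp0 f0 = p := by rw [hf0, ← Q0_Fm, Fm_Gm]
  have hdec0 := decomp_eq f0 p hmp0f0
  set q0 : T := decompQ f0 with hq0
  obtain ⟨r', hr', ⟨e1⟩⟩ := reduce_high n p hp0 (n - 1) 1 0 q0 (by omega) le_rfl
      (by rw [Polynomial.degree_zero]; exact WithBot.bot_lt_coe _)
  have hQf0 : Q = Fm (P + tx * 0 + tx ^ 1 * q0) := by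
    have h1 : P + tx * 0 + tx ^ 1 * q0 = P + tx * q0 := by ring
    rw [h1, ← hdec0, hf0, Fm_Gm]
  rw [← hQf0] at e1
  obtain ⟨b, g, hFmg, hgcoeff⟩ := zshift p hQ r' hr'
  obtain ⟨e2⟩ := isoZ (Fm (P + tx * r')) b n
  rw [← hFmg] at e2
  have hmp0g : mp0 g = p := by
    rw [← Q0_Fm, hFmg, Q0_zsubst, Q0_Fm, mp0_P_add_tx]
  set t3 : T := truncLow g n with ht3
  have htr := trunc_eq g n
  have hFg : Fm g = Fm t3 + X 0 ^ n * Fm (truncHigh g n) := by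
    conv_lhs => rw [htr]
    rw [map_add, map_mul, map_pow, Fm_tx]
    ring
  obtain ⟨e3⟩ := isoA (Fm t3) (Fm (truncHigh g n)) n
  rw [← hFg] at e3
  have ht3coeff : ∀ k, t3.coeff k = g.coeff k %ₘ Polynomial.X ^ n := fun k => truncLow_coeff g n k
  have hmp0t3 : mp0 t3 = p := by
    refine Polynomial.ext fun k => ?_
    rw [mp0_coeff, ht3coeff k, coeff0_modX _ n hn, ← mp0_coeff, hmp0g]
  have ht3high : ∀ k, d - 1 ≤ k → t3.coeff k = Polynomial.C (p.coeff k) := by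
    intro k hk
    rw [ht3coeff k, hgcoeff k hk, modX_C _ n hn]
  set q3 : T := decompQ t3 with hq3
  have hdec3 := decomp_eq t3 p hmp0t3
  have hq3deg : q3.degree < ((d - 1 : ℕ) : WithBot ℕ) := decompQ_degree_lt t3 p (d - 1) ht3high
  refine ⟨Fm t3, ?_, ⟨?_, p, Fm q3, ?_, Or.inr ?_⟩, ⟨(e1.trans e2).trans e3⟩⟩
  · rw [Q0_Fm, hmp0t3]
    exact hQ
  · have hb : degreeOf 0 (Fm t3) ≤ n - 1 := by
      refine degreeOf0_Fm t3 (n - 1) fun k => ?_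
      rw [ht3coeff k]
      have := natDegree_modX (g.coeff k) n hn
      omega
    omega
  · conv_lhs => rw [hdec3]
    rw [map_add, map_mul, Fm_tx, ← hP, Fm_P]
  · have h1 : degreeOf 1 (Fm q3) ≤ q3.natDegree := degreeOf1_Fm q3
    have h2 : q3.natDegree ≤ d - 2 := by
      by_cases hz : q3 = 0
      · rw [hz, Polynomial.natDegree_zero]
        omega
      · have h3 := (Polynomial.natDegree_lt_iff_degree_lt hz).mpr hq3deg
        omega
    omega
end
end

section
/- Let n ≥ 1 be an integer, Q ∈ ℂ[x,z] a polynomial, and set P = x^n y − Q(x,z) ∈ ℂ[x,y,z]. Let B ∈ ℂ[x,y,z] be a polynomial such that for infinitely many constants c ∈ ℂ there exist polynomials r_c(x) ∈ ℂ[x] and s_c ∈ ℂ[x,y,z] with B = r_c(x) + s_c·(P − c). Then B belongs to the ℂ-subalgebra of ℂ[x,y,z] generated by x and P, i.e. B ∈ ℂ[x, x^n y − Q(x,z)]. -/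
open MvPolynomial

noncomputable section

-- helpers
def thetaA : R3 →ₐ[ℂ] Polynomial R2 :=
  aeval ![Polynomial.C (X 0), Polynomial.X, Polynomial.C (X 1)]

lemma theta_toXYZ (g : R2) : thetaA (toXYZ g) = Polynomial.C g := by
  have h : thetaA.toRingHom.comp toXYZ.toRingHom
      = (Polynomial.C : R2 →+* Polynomial R2) := by
    apply MvPolynomial.ringHom_ext
    · intro a
      simp [thetaA, toXYZ, MvPolynomial.algebraMap_eq]
    · intro i
      fin_cases i <;> simp [thetaA, toXYZ]
  exact congrFun (congrArg (fun f => f.toFun) h) g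

lemma theta_dan (Q : R2) (n : ℕ) (c : ℂ) :
    thetaA (danPoly Q n - C c) =
      Polynomial.C ((X 0 : R2) ^ n) * Polynomial.X + Polynomial.C (-(Q + C c)) := by
  simp only [danPoly, sub_sub, map_sub, map_add, map_mul, map_pow]
  rw [theta_toXYZ]
  have h1 : thetaA (X 0) = Polynomial.C (X 0 : R2) := by simp [thetaA]
  have h2 : thetaA (X 1) = Polynomial.X := by simp [thetaA]
  have h3 : thetaA (C c : R3) = Polynomial.C (C c : R2) := by
    simp [thetaA, MvPolynomial.algebraMap_eq]
  rw [h1, h2, h3, Polynomial.C_neg, Polynomial.C_add]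
  ring

lemma key1 (Q : R2) (n : ℕ) (c : ℂ) (g : R2) (s : R3)
    (h : toXYZ g = s * (danPoly Q n - C c)) : g = 0 := by
  have hθ : Polynomial.C g = thetaA s *
      (Polynomial.C ((X 0 : R2) ^ n) * Polynomial.X + Polynomial.C (-(Q + C c))) := by
    have := congrArg thetaA h
    rw [theta_toXYZ, map_mul, theta_dan] at this
    exact this
  by_contra hg
  have hlin : (Polynomial.C ((X 0 : R2) ^ n) * Polynomial.X + Polynomial.C (-(Q + C c))).natDegree = 1 :=
    Polynomial.natDegree_linear (pow_ne_zero _ (MvPolynomial.X_ne_zero 0))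
  have hs : thetaA s ≠ 0 := by
    intro h0
    rw [h0, zero_mul] at hθ
    exact hg (by simpa using hθ)
  have hlin0 : (Polynomial.C ((X 0 : R2) ^ n) * Polynomial.X + Polynomial.C (-(Q + C c))) ≠ 0 := by
    intro h0
    rw [h0, Polynomial.natDegree_zero] at hlin
    omega
  have := Polynomial.natDegree_mul hs hlin0
  rw [← hθ, hlin, Polynomial.natDegree_C] at this
  omega

end

noncomputable section Helpers2

lemma comp_toXYZ (f : R3 →ₐ[ℂ] R3) (h0 : f (X 0) = X 0) (h2 : f (X 2) = X 2) (g : R2) :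
    f (toXYZ g) = toXYZ g := by
  have h : f.comp toXYZ = toXYZ := by
    apply MvPolynomial.algHom_ext
    intro i
    fin_cases i
    · simpa [toXYZ] using h0
    · simpa [toXYZ] using h2
  exact DFunLike.congr_fun h g

lemma aeval_X0_eq_sum (u : Polynomial ℂ) :
    Polynomial.aeval (X 0 : R2) u
      = ∑ i ∈ u.support, monomial (Finsupp.single 0 i) (u.coeff i) := by
  rw [Polynomial.aeval_def, Polynomial.eval₂_eq_sum, Polynomial.sum]
  refine Finset.sum_congr rfl fun i _ => ?_
  rw [MvPolynomial.algebraMap_eq, X_pow_eq_monomial, C_mul_monomial, mul_one]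

lemma coeff_xk_aeval (k : ℕ) (u : Polynomial ℂ) (m : Fin 2 →₀ ℕ)
    (hm : m 1 ≠ 0 ∨ m 0 < k) :
    coeff m ((X 0 : R2) ^ k * Polynomial.aeval (X 0 : R2) u) = 0 := by
  have h : (X 0 : R2) ^ k * Polynomial.aeval (X 0 : R2) u
      = Polynomial.aeval (X 0 : R2) (u * Polynomial.X ^ k) := by
    rw [map_mul, map_pow, Polynomial.aeval_X]; ring
  rw [h, aeval_X0_eq_sum, MvPolynomial.coeff_sum]
  refine Finset.sum_eq_zero fun i hi => ?_
  rw [coeff_monomial]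
  split_ifs with heq
  · rcases hm with hm1 | hm0
    · exfalso; apply hm1; rw [← heq]; simp
    · have hi0 : i = m 0 := by rw [← heq]; simp
      rw [Polynomial.coeff_mul_X_pow']
      rw [if_neg]
      omega
  · rfl

lemma good_repr (k : ℕ) (g : R2) (hg : ∀ m ∈ g.support, m 1 = 0 ∧ k ≤ m 0) :
    ∃ u : Polynomial ℂ, g = (X 0 : R2) ^ k * Polynomial.aeval (X 0 : R2) u := by
  refine ⟨∑ m ∈ g.support, Polynomial.C (coeff m g) * Polynomial.X ^ (m 0 - k), ?_⟩
  rw [map_sum, Finset.mul_sum]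
  conv_lhs => rw [(support_sum_monomial_coeff g).symm]
  refine Finset.sum_congr rfl fun m hm => ?_
  obtain ⟨h1, h2⟩ := hg m hm
  have hmm : m = Finsupp.single 0 (m 0) := by
    ext i
    fin_cases i
    · simp
    · simpa using h1
  rw [map_mul, Polynomial.aeval_C, map_pow, Polynomial.aeval_X]
  rw [MvPolynomial.algebraMap_eq, X_pow_eq_monomial, X_pow_eq_monomial, C_mul_monomial,
    monomial_mul, mul_one, one_mul, ← Finsupp.single_add]
  have : k + (m 0 - k) = m 0 := by omega
  rw [this, ← hmm]

lemma stepA (Q : R2) (n : ℕ) (B : R3) :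
    ∃ (N : ℕ) (E : R3), aeval ![X 0, danPoly Q n, X 2] E = X 0 ^ N * B := by
  induction B using MvPolynomial.induction_on with
  | C a => exact ⟨0, C a, by simp⟩
  | add p q hp hq =>
      obtain ⟨N1, E1, h1⟩ := hp
      obtain ⟨N2, E2, h2⟩ := hq
      refine ⟨N1 + N2, X 0 ^ N2 * E1 + X 0 ^ N1 * E2, ?_⟩
      have hx : aeval ![X 0, danPoly Q n, X 2] (X 0 : R3) = X 0 := by simp
      rw [map_add, map_mul, map_mul, map_pow, map_pow, hx, h1, h2]
      ring
  | mul_X p i hp =>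
      obtain ⟨N, E, h⟩ := hp
      fin_cases i
      · refine ⟨N, E * X 0, ?_⟩
        rw [map_mul, h]
        simp only [aeval_X, Matrix.cons_val_zero]
        show X 0 ^ N * p * X 0 = X 0 ^ N * (p * X 0)
        ring
      · refine ⟨N + n, E * (X 1 + toXYZ Q), ?_⟩
        rw [map_mul, map_add, h]
        have h1 : aeval ![X 0, danPoly Q n, X 2] (X 1 : R3) = danPoly Q n := by simp
        have h2 : aeval ![X 0, danPoly Q n, X 2] (toXYZ Q) = toXYZ Q :=
          comp_toXYZ _ (by simp) (by simp) Q
        rw [h1, h2, danPoly]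
        show X 0 ^ N * p * (X 0 ^ n * X 1 - toXYZ Q + toXYZ Q) = X 0 ^ (N + n) * (p * X 1)
        ring
      · refine ⟨N, E * X 2, ?_⟩
        rw [map_mul, h]
        simp only [aeval_X]
        show X 0 ^ N * p * ![X 0, danPoly Q n, X 2] 2 = X 0 ^ N * (p * X 2)
        show X 0 ^ N * p * X 2 = X 0 ^ N * (p * X 2)
        ring

lemma psi_sub_subst_mem (Q : R2) (n : ℕ) (c : ℂ) (E : R3) :
    aeval ![X 0, danPoly Q n, X 2] E - aeval ![X 0, C c, X 2] E
      ∈ Ideal.span {danPoly Q n - C c} := by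
  set I := Ideal.span {danPoly Q n - C c} with hI
  have h : (Ideal.Quotient.mkₐ ℂ I).comp (aeval ![X 0, danPoly Q n, X 2])
      = (Ideal.Quotient.mkₐ ℂ I).comp (aeval ![X 0, C c, X 2]) := by
    apply MvPolynomial.algHom_ext
    intro i
    fin_cases i
    · simp
    · show Ideal.Quotient.mkₐ ℂ I (aeval ![X 0, danPoly Q n, X 2] (X 1))
        = Ideal.Quotient.mkₐ ℂ I (aeval ![X 0, C c, X 2] (X 1))
      simp only [aeval_X, Matrix.cons_val_one, Matrix.head_cons,
        Ideal.Quotient.mkₐ_eq_mk]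
      rw [Ideal.Quotient.eq]
      exact Ideal.subset_span rfl
    · simp
  have h2 := DFunLike.congr_fun h E
  simp only [AlgHom.coe_comp, Function.comp_apply, Ideal.Quotient.mkₐ_eq_mk] at h2
  exact Ideal.Quotient.eq.mp h2

lemma eval_theta (c : ℂ) (E : R3) :
    Polynomial.eval (C c : R2) (thetaA E) = aeval ![X 0, C c, X 1] E := by
  have h : (Polynomial.evalRingHom (C c : R2)).comp thetaA.toRingHom
      = (aeval ![X 0, C c, X 1] : R3 →ₐ[ℂ] R2).toRingHom := by
    apply MvPolynomial.ringHom_ext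
    · intro a
      simp [thetaA, MvPolynomial.algebraMap_eq]
    · intro i
      fin_cases i <;> simp [thetaA]
  exact DFunLike.congr_fun h E

lemma toXYZ_Nc (c : ℂ) (E : R3) :
    toXYZ (aeval ![X 0, C c, X 1] E) = aeval ![X 0, C c, X 2] E := by
  have h : toXYZ.comp (aeval ![X 0, C c, X 1] : R3 →ₐ[ℂ] R2)
      = (aeval ![X 0, C c, X 2] : R3 →ₐ[ℂ] R3) := by
    apply MvPolynomial.algHom_ext
    intro i
    fin_cases i <;> simp [toXYZ]
  exact DFunLike.congr_fun h E

lemma eta_theta (Q : R2) (n : ℕ) (E : R3) :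
    Polynomial.eval₂ (toXYZ : R2 →ₐ[ℂ] R3).toRingHom (danPoly Q n) (thetaA E)
      = aeval ![X 0, danPoly Q n, X 2] E := by
  have h : (Polynomial.eval₂RingHom (toXYZ : R2 →ₐ[ℂ] R3).toRingHom (danPoly Q n)).comp
        thetaA.toRingHom
      = (aeval ![X 0, danPoly Q n, X 2] : R3 →ₐ[ℂ] R3).toRingHom := by
    apply MvPolynomial.ringHom_ext
    · intro a
      simp [thetaA, MvPolynomial.algebraMap_eq, toXYZ]
    · intro i
      fin_cases i <;> simp [thetaA, toXYZ]
  exact DFunLike.congr_fun h E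

end Helpers2

set_option maxHeartbeats 1000000 in
/-- if `B = r_c(x) + s_c (P - c)` for infinitely many `c ∈ ℂ`, where
`P = x^n y - Q(x,z)`, then `B ∈ ℂ[x, P]`. -/
theorem stmt_18 (n : ℕ) (hn : 1 ≤ n) (Q : R2) (B : R3)
    (hB : {c : ℂ | ∃ (r : Polynomial ℂ) (s : R3),
        B = Polynomial.aeval (X 0 : R3) r + s * (danPoly Q n - C c)}.Infinite) :
    B ∈ Algebra.adjoin ℂ ({X 0, danPoly Q n} : Set R3) := by
  classical
  obtain ⟨N, E, hE⟩ := stepA Q n B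
  set F : Polynomial R2 := thetaA E with hF
  -- Step 1: for all good c, eval of F at C c is x^N times a poly in x
  have hkey : ∀ c ∈ {c : ℂ | ∃ (r : Polynomial ℂ) (s : R3),
      B = Polynomial.aeval (X 0 : R3) r + s * (danPoly Q n - C c)},
      ∃ r : Polynomial ℂ,
        Polynomial.eval (C c : R2) F = X 0 ^ N * Polynomial.aeval (X 0 : R2) r := by
    intro c hc
    obtain ⟨r, s, hrs⟩ := hc
    refine ⟨r, ?_⟩
    have hmem := psi_sub_subst_mem Q n c E
    rw [hE, hrs] at hmem
    have hIc : (danPoly Q n - C c) ∈ Ideal.span {danPoly Q n - C c} := Ideal.subset_span rfl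
    have hmem2 : aeval ![X 0, C c, X 2] E - X 0 ^ N * Polynomial.aeval (X 0 : R3) r
        ∈ Ideal.span {danPoly Q n - C c} := by
      have h3 := Ideal.sub_mem _ (Ideal.mul_mem_left _ (X 0 ^ N * s) hIc) hmem
      convert h3 using 1
      ring
    obtain ⟨s', hs'⟩ := Ideal.mem_span_singleton'.mp hmem2
    have hL : toXYZ (aeval ![X 0, C c, X 1] E - X 0 ^ N * Polynomial.aeval (X 0 : R2) r)
        = aeval ![X 0, C c, X 2] E - X 0 ^ N * Polynomial.aeval (X 0 : R3) r := by
      rw [map_sub, toXYZ_Nc, map_mul, map_pow]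
      have h1 : toXYZ (X 0 : R2) = X 0 := by simp [toXYZ]
      have h2 : toXYZ (Polynomial.aeval (X 0 : R2) r) = Polynomial.aeval (X 0 : R3) r := by
        rw [← Polynomial.aeval_algHom_apply, h1]
      rw [h1, h2]
    have h0 := key1 Q n c _ s' (by rw [hL, hs'])
    have h4 : aeval ![X 0, C c, X 1] E = X 0 ^ N * Polynomial.aeval (X 0 : R2) r :=
      sub_eq_zero.mp h0
    rw [eval_theta, h4]
  -- Step 2: bad coefficients of F vanish
  have hcoeff : ∀ (j : ℕ) (m : Fin 2 →₀ ℕ), (m 1 ≠ 0 ∨ m 0 < N) →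
      coeff m (F.coeff j) = 0 := by
    intro j m hm
    by_cases hj : j ∈ F.support
    swap
    · rw [Polynomial.notMem_support_iff.mp hj]
      exact coeff_zero m
    · set p : Polynomial ℂ :=
        ∑ k ∈ F.support, Polynomial.C (coeff m (F.coeff k)) * Polynomial.X ^ k with hp
      have hev : ∀ c : ℂ, Polynomial.eval c p
          = coeff m (Polynomial.eval (C c : R2) F) := by
        intro c
        rw [hp, Polynomial.eval_finset_sum]
        conv_rhs => rw [Polynomial.eval_eq_sum, Polynomial.sum, MvPolynomial.coeff_sum]
        refine Finset.sum_congr rfl fun k _ => ?_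
        rw [Polynomial.eval_mul, Polynomial.eval_C, Polynomial.eval_pow, Polynomial.eval_X]
        rw [← MvPolynomial.C_pow, mul_comm (F.coeff k), MvPolynomial.coeff_C_mul]
        ring
      have hroot : p = 0 := by
        apply Polynomial.eq_zero_of_infinite_isRoot
        refine Set.Infinite.mono ?_ hB
        intro c hc
        obtain ⟨r, hr⟩ := hkey c hc
        show Polynomial.IsRoot p c
        rw [Polynomial.IsRoot, hev c, hr]
        exact coeff_xk_aeval N r m hm
      have hcj : Polynomial.coeff p j = coeff m (F.coeff j) := by
        rw [hp, Polynomial.finset_sum_coeff]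
        rw [Finset.sum_eq_single j]
        · simp
        · intro k _ hkj
          rw [Polynomial.coeff_C_mul, Polynomial.coeff_X_pow, if_neg (Ne.symm hkj), mul_zero]
        · intro h
          exact absurd hj h
      rw [← hcj, hroot, Polynomial.coeff_zero]
  -- Step 3: each coefficient of F is x^N times a poly in x
  have hrep : ∀ j : ℕ, ∃ u : Polynomial ℂ,
      F.coeff j = (X 0 : R2) ^ N * Polynomial.aeval (X 0 : R2) u := by
    intro j
    apply good_repr
    intro m hm
    by_contra hcon
    rw [not_and_or] at hcon
    have hbad : m 1 ≠ 0 ∨ m 0 < N := by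
      rcases hcon with h | h
      · exact Or.inl h
      · exact Or.inr (by omega)
    exact (MvPolynomial.mem_support_iff.mp hm) (hcoeff j m hbad)
  choose u hu using hrep
  -- Step 4: assemble
  have hEF : Polynomial.eval₂ (toXYZ : R2 →ₐ[ℂ] R3).toRingHom (danPoly Q n) F
      = X 0 ^ N * B := by
    rw [hF, eta_theta, hE]
  have hsum : Polynomial.eval₂ (toXYZ : R2 →ₐ[ℂ] R3).toRingHom (danPoly Q n) F
      = ∑ j ∈ F.support, toXYZ (F.coeff j) * danPoly Q n ^ j := by
    rw [Polynomial.eval₂_eq_sum, Polynomial.sum]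
    rfl
  set G : R3 := ∑ j ∈ F.support, Polynomial.aeval (X 0 : R3) (u j) * danPoly Q n ^ j
    with hG
  have hXG : X 0 ^ N * B = X 0 ^ N * G := by
    rw [← hEF, hsum, hG, Finset.mul_sum]
    refine Finset.sum_congr rfl fun j _ => ?_
    rw [hu j, map_mul, map_pow]
    have h1 : toXYZ (X 0 : R2) = X 0 := by simp [toXYZ]
    have h2 : toXYZ (Polynomial.aeval (X 0 : R2) (u j)) = Polynomial.aeval (X 0 : R3) (u j) := by
      rw [← Polynomial.aeval_algHom_apply, h1]
    rw [h1, h2]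
    ring
  have hBG : B = G := mul_left_cancel₀ (pow_ne_zero N (MvPolynomial.X_ne_zero 0)) hXG
  rw [hBG, hG]
  apply Subalgebra.sum_mem
  intro j _
  apply mul_mem
  · have hx : (X 0 : R3) ∈ Algebra.adjoin ℂ ({X 0, danPoly Q n} : Set R3) :=
      Algebra.subset_adjoin (Set.mem_insert _ _)
    have hle : Algebra.adjoin ℂ ({X 0} : Set R3)
        ≤ Algebra.adjoin ℂ ({X 0, danPoly Q n} : Set R3) :=
      Algebra.adjoin_mono (Set.singleton_subset_iff.mpr (Set.mem_insert _ _))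
    exact hle (Polynomial.aeval_mem_adjoin_singleton ℂ (X 0 : R3))
  · have hmem : danPoly Q n ∈ ({X 0, danPoly Q n} : Set R3) :=
      Set.mem_insert_iff.mpr (Or.inr rfl)
    exact Subalgebra.pow_mem _ (Algebra.subset_adjoin hmem) j
end
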